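/- arXiv:1712.07367 — 7 statements merged into one kernel-verified Lean document; each statement's English description precedes it below -/
import Mathlib

section
/- Let W be a graphon and (Aₙ) a sequence of measurable sets in Ω such that ∫_{Aₙ×Aₙ} W → 0. If the indicator functions 1_{Aₙ} converge weak* (in L^∞(Ω) as the dual of L¹(Ω)) to a function f, then the support of f is an independent set in W, i.e., W = 0 almost everywhere on supp(f) × supp(f). -/
open MeasureTheory ENNReal Filter
open scoped Classical

noncomputable section

variable {Ω : Type*} [MeasurableSpace Ω]

/-- A graphon: symmetric measurable function with values in `[0,1]`. -/
def IsGraphon (W : Ω → Ω → ℝ) : Prop :=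
  Measurable (Function.uncurry W) ∧ (∀ x y, W x y = W y x) ∧ ∀ x y, W x y ∈ Set.Icc (0 : ℝ) 1

/-- `A` is an independent set of the graphon `W`: `W = 0` a.e. on `A × A`. -/
def IsIndepSet (μ : Measure Ω) (W : Ω → Ω → ℝ) (A : Set Ω) : Prop :=
  MeasurableSet A ∧ ∀ᵐ p ∂(μ.prod μ), p.1 ∈ A → p.2 ∈ A → W p.1 p.2 = 0

/-- The independence number: supremum of measures of independent sets. -/
def indepNum (μ : Measure Ω) (W : Ω → Ω → ℝ) : ℝ≥0∞ :=
  ⨆ (A : Set Ω) (_ : IsIndepSet μ W A), μ A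

/-- Homomorphism density of a finite graph `H` on `Fin k` in `W`
(product over unordered edges, written with `i < j`). -/
def homDensity {k : ℕ} (μ : Measure Ω) (W : Ω → Ω → ℝ) (H : SimpleGraph (Fin k)) : ℝ :=
  ∫ x : Fin k → Ω,
    ∏ p ∈ Finset.univ.filter (fun p : Fin k × Fin k => p.1 < p.2 ∧ H.Adj p.1 p.2),
      W (x p.1) (x p.2) ∂(Measure.pi fun _ => μ)

/-- The cut norm of a kernel `U`. -/
def cutNorm (μ : Measure Ω) (U : Ω → Ω → ℝ) : ℝ :=
  ⨆ (S : {S : Set Ω // MeasurableSet S}) (T : {T : Set Ω // MeasurableSet T}),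
    |∫ p in S.1 ×ˢ T.1, U p.1 p.2 ∂(μ.prod μ)|

/-- The cut distance: infimum over measure-preserving isomorphisms of the cut norm. -/
def cutDist (μ : Measure Ω) (W₁ W₂ : Ω → Ω → ℝ) : ℝ :=
  ⨅ (e : {e : Ω ≃ᵐ Ω // MeasurePreserving e μ μ}),
    cutNorm μ (fun x y => W₁ x y - W₂ (e.1 x) (e.1 y))

/-- `W` is a graphon representation of the finite graph `G`. -/
def IsGraphonRep {V : Type*} [Fintype V] (μ : Measure Ω) (G : SimpleGraph V)
    (W : Ω → Ω → ℝ) : Prop :=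
  ∃ P : V → Set Ω, (∀ v, MeasurableSet (P v)) ∧ Pairwise (Function.onFun Disjoint P) ∧
    (∀ v, μ (P v) = 1 / (Fintype.card V : ℝ≥0∞)) ∧ (⋃ v, P v) = Set.univ ∧
    ∀ u v, ∀ᵐ p ∂(μ.prod μ), p.1 ∈ P u → p.2 ∈ P v →
      W p.1 p.2 = if G.Adj u v then 1 else 0

/-- The chromatic number of a graphon, as an extended natural number. -/
def graphonChrom (μ : Measure Ω) (W : Ω → Ω → ℝ) : ℕ∞ :=
  sInf ((↑) '' {k : ℕ | ∃ f : Ω → Fin k, Measurable f ∧ ∀ i, IsIndepSet μ W (f ⁻¹' {i})})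

/-- A fractional coloring of a graphon. -/
def IsFracColoring (μ : Measure Ω) (W : Ω → Ω → ℝ) (c : Set Ω → ℝ≥0∞) : Prop :=
  (∀ I, c I ≤ 1) ∧ (∀ I, ¬ IsIndepSet μ W I → c I = 0) ∧
    ∀ᵐ x ∂μ, 1 ≤ ∑' I : Set Ω, Set.indicator I (fun _ => c I) x

/-- The fractional chromatic number of a graphon. -/
def graphonFracChrom (μ : Measure Ω) (W : Ω → Ω → ℝ) : ℝ≥0∞ :=
  ⨅ (c : Set Ω → ℝ≥0∞) (_ : IsFracColoring μ W c), ∑' I : Set Ω, c I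

/-- A fractional clique of a graphon. -/
def IsFracClique (μ : Measure Ω) (W : Ω → Ω → ℝ) (f : Ω → ℝ≥0∞) : Prop :=
  Measurable f ∧ (∀ x, f x ≠ ∞) ∧ ∀ I, IsIndepSet μ W I → ∫⁻ x in I, f x ∂μ ≤ 1

/-- The fractional clique number of a graphon. -/
def graphonFracClique (μ : Measure Ω) (W : Ω → Ω → ℝ) : ℝ≥0∞ :=
  ⨆ (f : Ω → ℝ≥0∞) (_ : IsFracClique μ W f), ∫⁻ x, f x ∂μ

/-- The clique number of a graphon. -/
def graphonClique (μ : Measure Ω) (W : Ω → Ω → ℝ) : ℕ∞ :=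
  sSup ((↑) '' {r : ℕ | 0 < homDensity μ W (⊤ : SimpleGraph (Fin r))})

/-- Independent set of a finite simple graph. -/
def GraphIndep {V : Type*} (G : SimpleGraph V) (I : Set V) : Prop :=
  I.Pairwise fun u v => ¬ G.Adj u v

/-- Fractional chromatic number of a finite graph. -/
def fracChrom {V : Type*} [Fintype V] (G : SimpleGraph V) : ℝ≥0∞ :=
  ⨅ (c : Set V → ℝ≥0∞) (_ : (∀ I, c I ≤ 1) ∧ (∀ I, ¬ GraphIndep G I → c I = 0) ∧
      ∀ v, 1 ≤ ∑' I : Set V, Set.indicator I (fun _ => c I) v),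
    ∑' I : Set V, c I

/-- Fractional clique number of a finite graph. -/
def fracClique {V : Type*} [Fintype V] (G : SimpleGraph V) : ℝ≥0∞ :=
  ⨆ (f : V → ℝ≥0∞) (_ : ∀ I : Set V, GraphIndep G I → ∑' v : I, f v ≤ 1),
    ∑ v, f v

/-- The b-fold chromatic number of a graphon. -/
def bFoldChrom (μ : Measure Ω) (W : Ω → Ω → ℝ) (b : ℕ) : ℕ∞ :=
  sInf ((↑) '' {k : ℕ | ∃ p : Ω → Finset (Fin k),
    (∀ i, MeasurableSet {x | i ∈ p x}) ∧ (∀ x, (p x).card = b) ∧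
    ∀ᵐ q ∂(μ.prod μ), W q.1 q.2 = 0 ∨ p q.1 ∩ p q.2 = ∅})

/-- Membership in the weak* closure of the convex hull of indicators of
independent sets (the independent set polyton `IND(W)`). -/
def InIND (μ : Measure Ω) (W : Ω → Ω → ℝ) (f : Ω → ℝ) : Prop :=
  ∀ (ε : ℝ), 0 < ε → ∀ (m : ℕ) (g : Fin m → Ω → ℝ), (∀ i, Integrable (g i) μ) →
    ∃ (t : ℕ) (a : Fin t → ℝ) (I : Fin t → Set Ω),
      (∀ j, 0 ≤ a j) ∧ (∑ j, a j = 1) ∧ (∀ j, IsIndepSet μ W (I j)) ∧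
      ∀ i, |∫ x, ((∑ j, a j * Set.indicator (I j) 1 x) - f x) * g i x ∂μ| < ε

end

open MeasureTheory ENNReal Filter

section helper
variable {Ω : Type*} [MeasurableSpace Ω] {μ : Measure Ω}

lemma my_integrable_of_bdd [IsFiniteMeasure μ] {g : Ω → ℝ} (hg : AEStronglyMeasurable g μ)
    {C : ℝ} (h : ∀ᵐ x ∂μ, |g x| ≤ C) : Integrable g μ :=
  (integrable_const C).mono' hg (h.mono fun x hx => by simpa [Real.norm_eq_abs] using hx)

end helper


theorem stmt_1 {Ω : Type*} [MeasurableSpace Ω] (μ : Measure Ω) [IsProbabilityMeasure μ]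
    [NullSingletonClass μ] {W : Ω → Ω → ℝ} (hW : IsGraphon W)
    (A : ℕ → Set Ω) (hA : ∀ n, MeasurableSet (A n))
    (hint : Tendsto (fun n => ∫ p in (A n) ×ˢ (A n), W p.1 p.2 ∂(μ.prod μ)) atTop (nhds 0))
    (f : Ω → ℝ) (hf : Measurable f)
    (hweak : ∀ g : Ω → ℝ, Integrable g μ →
      Tendsto (fun n => ∫ x, Set.indicator (A n) 1 x * g x ∂μ) atTop
        (nhds (∫ x, f x * g x ∂μ))) :
    IsIndepSet μ W (Function.support f) := by
  obtain ⟨hWm, hWsymm, hWic⟩ := hW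
  have hW0 : ∀ x y, 0 ≤ W x y := fun x y => (hWic x y).1
  have hW1 : ∀ x y, W x y ≤ 1 := fun x y => (hWic x y).2
  have hWm2 : Measurable (fun z : Ω × Ω => W z.1 z.2) := hWm
  have hWx : ∀ y, Measurable (fun x => W x y) := fun y =>
    hWm2.comp (measurable_prodMk_right)
  have hWy : ∀ x, Measurable (fun y => W x y) := fun x =>
    hWm2.comp (measurable_prodMk_left)
  -- indicator integrability
  have hindm : ∀ S : Set Ω, MeasurableSet S → Measurable (Set.indicator S (1 : Ω → ℝ)) :=
    fun S hS => measurable_one.indicator hS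
  have hindbd : ∀ (S : Set Ω) x, |Set.indicator S (1 : Ω → ℝ) x| ≤ 1 := by
    intro S x
    by_cases hx : x ∈ S <;> simp [Set.indicator, hx]
  have hind_int : ∀ S : Set Ω, MeasurableSet S → Integrable (Set.indicator S (1 : Ω → ℝ)) μ :=
    fun S hS => my_integrable_of_bdd (hindm S hS).aestronglyMeasurable
      (ae_of_all _ (hindbd S))
  -- Step 1 : from hweak with indicator test functions
  have hEkey : ∀ E : Set Ω, MeasurableSet E →
      Tendsto (fun n => (μ (A n ∩ E)).toReal) atTop (nhds (∫ x in E, f x ∂μ)) := by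
    intro E hE
    have h := hweak (Set.indicator E 1) (hind_int E hE)
    have h1 : ∀ n, ∫ x, Set.indicator (A n) 1 x * Set.indicator E 1 x ∂μ
        = (μ (A n ∩ E)).toReal := by
      intro n
      have : (fun x => Set.indicator (A n) 1 x * Set.indicator E 1 x)
          = Set.indicator (A n ∩ E) (1 : Ω → ℝ) := by
        funext x
        by_cases h1 : x ∈ A n <;> by_cases h2 : x ∈ E <;>
          simp [Set.indicator, h1, h2, Set.mem_inter_iff]
      rw [this, integral_indicator_one ((hA n).inter hE), measureReal_def]
    have h2 : ∫ x, f x * Set.indicator E 1 x ∂μ = ∫ x in E, f x ∂μ := by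
      have : (fun x => f x * Set.indicator E 1 x) = Set.indicator E f := by
        funext x
        by_cases h2 : x ∈ E <;> simp [Set.indicator, h2]
      rw [this, integral_indicator hE]
    rw [h2] at h
    exact h.congr h1
  -- bounds on limits of measures
  have hEbd : ∀ E : Set Ω, MeasurableSet E →
      0 ≤ ∫ x in E, f x ∂μ ∧ ∫ x in E, f x ∂μ ≤ (μ E).toReal := by
    intro E hE
    constructor
    · exact ge_of_tendsto' (hEkey E hE) (fun n => ENNReal.toReal_nonneg)
    · exact le_of_tendsto' (hEkey E hE) (fun n =>
        ENNReal.toReal_mono (measure_ne_top μ E) (measure_mono Set.inter_subset_right))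
  -- integrability of f on preimages of bounded intervals
  have hfint : ∀ a b : ℝ, IntegrableOn f (f ⁻¹' Set.Ioc a b) μ := by
    intro a b
    refine my_integrable_of_bdd (hf.aestronglyMeasurable.restrict) (C := max |a| |b|) ?_
    refine (ae_restrict_iff' (hf measurableSet_Ioc)).2 (ae_of_all _ fun x hx => ?_)
    rcases hx with ⟨h1, h2⟩
    rw [abs_le]
    constructor
    · calc -(max |a| |b|) ≤ -|a| := by simp [neg_le_neg_iff, le_max_left]
        _ ≤ a := neg_abs_le a
        _ ≤ f x := h1.le
    · exact h2.trans ((le_abs_self b).trans (le_max_right _ _))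
  -- upper bound : μ {x | 2 < f x} = 0
  have hupper : μ {x | 2 < f x} = 0 := by
    have hnull : ∀ n : ℕ, μ (f ⁻¹' Set.Ioc 2 n) = 0 := by
      intro n
      set E := f ⁻¹' Set.Ioc 2 (n : ℝ) with hEdef
      have hE : MeasurableSet E := hf measurableSet_Ioc
      have hlow : 2 * (μ E).toReal ≤ ∫ x in E, f x ∂μ := by
        have := setIntegral_mono_on (integrableOn_const (measure_ne_top μ E))
          (hfint 2 n) hE (fun x hx => hx.1.le)
        simpa [setIntegral_const, mul_comm, measureReal_def] using this
      have hup := (hEbd E hE).2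
      have : (μ E).toReal = 0 := by nlinarith [ENNReal.toReal_nonneg (a := μ E)]
      exact (ENNReal.toReal_eq_zero_iff _).1 this |>.resolve_right (measure_ne_top μ E)
    have hsub : {x | 2 < f x} ⊆ ⋃ n : ℕ, f ⁻¹' Set.Ioc 2 n := by
      intro x hx
      obtain ⟨n, hn⟩ := exists_nat_gt (f x)
      exact Set.mem_iUnion.2 ⟨n, hx, hn.le⟩
    exact measure_mono_null hsub (measure_iUnion_null hnull)
  -- lower bound : μ {x | f x < 0} = 0
  have hlower : μ {x | f x < 0} = 0 := by
    have hnull : ∀ n : ℕ, μ (f ⁻¹' Set.Ioc (-(n : ℝ)) (-(1 / (n + 1)))) = 0 := by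
      intro n
      set E := f ⁻¹' Set.Ioc (-(n : ℝ)) (-(1 / (n + 1))) with hEdef
      have hE : MeasurableSet E := hf measurableSet_Ioc
      have hup : ∫ x in E, f x ∂μ ≤ (-(1 / (n + 1 : ℝ))) * (μ E).toReal := by
        have := setIntegral_mono_on (hfint (-(n : ℝ)) (-(1 / (n + 1))))
          (integrableOn_const (measure_ne_top μ E)) hE (fun x hx => hx.2)
        rw [← hEdef] at this
        simpa [setIntegral_const, mul_comm, measureReal_def] using this
      have hlow := (hEbd E hE).1
      have hpos : (0 : ℝ) < 1 / (n + 1 : ℝ) := by positivity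
      have : (μ E).toReal = 0 := by nlinarith [ENNReal.toReal_nonneg (a := μ E)]
      exact (ENNReal.toReal_eq_zero_iff _).1 this |>.resolve_right (measure_ne_top μ E)
    have hsub : {x | f x < 0} ⊆ ⋃ n : ℕ, f ⁻¹' Set.Ioc (-(n : ℝ)) (-(1 / (n + 1))) := by
      intro x hx
      simp only [Set.mem_setOf_eq] at hx
      obtain ⟨n, hn⟩ := exists_nat_gt (max (-f x) (1 / (-f x)))
      refine Set.mem_iUnion.2 ⟨n, ?_, ?_⟩
      · have : -f x < n := lt_of_le_of_lt (le_max_left _ _) hn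
        linarith
      · have h1 : 1 / (-f x) < n + 1 := lt_trans (lt_of_le_of_lt (le_max_right _ _) hn)
          (by linarith)
        have h2 : (0:ℝ) < -f x := by linarith
        have := (div_lt_iff₀ h2).1 h1
        have : 1 / (n + 1 : ℝ) ≤ -f x := by
          rw [div_le_iff₀ (by positivity)]
          nlinarith
        linarith
    exact measure_mono_null hsub (measure_iUnion_null hnull)
  have hbd : ∀ᵐ x ∂μ, 0 ≤ f x ∧ f x ≤ 2 := by
    have h1 : ∀ᵐ x ∂μ, 0 ≤ f x := by
      rw [ae_iff]; simpa [not_le] using hlower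
    have h2 : ∀ᵐ x ∂μ, f x ≤ 2 := by
      rw [ae_iff]; simpa [not_le] using hupper
    filter_upwards [h1, h2] with x u v using ⟨u, v⟩
  -- Step 2 : kernel averages
  set Gn : ℕ → Ω → ℝ := fun n x => ∫ y, Set.indicator (A n) 1 y * W x y ∂μ with hGndef
  set G : Ω → ℝ := fun x => ∫ y, f y * W x y ∂μ with hGdef
  have hGnm : ∀ n, Measurable (Gn n) := by
    intro n
    have : StronglyMeasurable fun z : Ω × Ω => Set.indicator (A n) 1 z.2 * W z.1 z.2 :=
      (((hindm _ (hA n)).comp measurable_snd).mul hWm2).stronglyMeasurable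
    exact this.integral_prod_right'.measurable
  have hGm : Measurable G := by
    have : StronglyMeasurable fun z : Ω × Ω => f z.2 * W z.1 z.2 :=
      ((hf.comp measurable_snd).mul hWm2).stronglyMeasurable
    exact this.integral_prod_right'.measurable
  have hWabs : ∀ x y, |W x y| ≤ 1 := fun x y => abs_le.2 ⟨by linarith [hW0 x y], hW1 x y⟩
  have hGnbd : ∀ n x, |Gn n x| ≤ 1 := by
    intro n x
    have := norm_integral_le_of_norm_le_const (μ := μ)
      (f := fun y => Set.indicator (A n) 1 y * W x y) (C := 1)
      (ae_of_all _ fun y => by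
        rw [Real.norm_eq_abs, abs_mul]
        exact mul_le_one₀ (hindbd _ y) (abs_nonneg _) (hWabs x y))
    simpa [Real.norm_eq_abs] using this
  have hGbd : ∀ x, |G x| ≤ 2 := by
    intro x
    have := norm_integral_le_of_norm_le_const (μ := μ)
      (f := fun y => f y * W x y) (C := 2)
      (by
        filter_upwards [hbd] with y hy
        rw [Real.norm_eq_abs, abs_mul]
        have h1 : |f y| ≤ 2 := abs_le.2 ⟨by linarith [hy.1], hy.2⟩
        calc |f y| * |W x y| ≤ 2 * 1 :=
          mul_le_mul h1 (hWabs x y) (abs_nonneg _) (by norm_num)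
          _ = 2 := by norm_num)
    simpa [Real.norm_eq_abs] using this
  have hGn_tendsto : ∀ x, Tendsto (fun n => Gn n x) atTop (nhds (G x)) := by
    intro x
    exact hweak (fun y => W x y)
      (my_integrable_of_bdd (hWy x).aestronglyMeasurable (ae_of_all _ fun y => hWabs x y))
  have hL1 : Tendsto (fun n => ∫ x, |Gn n x - G x| ∂μ) atTop (nhds 0) := by
    have := tendsto_integral_of_dominated_convergence (μ := μ)
      (F := fun n x => |Gn n x - G x|) (f := fun _ => (0 : ℝ)) (fun _ => (3 : ℝ))
      (fun n => (((hGnm n).sub hGm).abs).aestronglyMeasurable)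
      (integrable_const 3)
      (fun n => ae_of_all _ fun x => by
        rw [Real.norm_eq_abs, abs_abs]
        calc |Gn n x - G x| ≤ |Gn n x| + |G x| := abs_sub _ _
          _ ≤ 1 + 2 := add_le_add (hGnbd n x) (hGbd x)
          _ = 3 := by norm_num)
      (ae_of_all _ fun x => by
        have := ((hGn_tendsto x).sub (tendsto_const_nhds (x := G x))).abs
        simpa using this)
    simpa using this
  -- Step 3 : rewrite the double integrals
  have hrw : ∀ n, ∫ p in (A n) ×ˢ (A n), W p.1 p.2 ∂(μ.prod μ)
      = ∫ x, Set.indicator (A n) 1 x * Gn n x ∂μ := by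
    intro n
    rw [← integral_indicator ((hA n).prod (hA n))]
    have heq : (Set.indicator ((A n) ×ˢ (A n)) (fun p : Ω × Ω => W p.1 p.2))
        = fun p : Ω × Ω =>
          Set.indicator (A n) 1 p.1 * (Set.indicator (A n) 1 p.2 * W p.1 p.2) := by
      funext p
      by_cases h1 : p.1 ∈ A n <;> by_cases h2 : p.2 ∈ A n <;>
        simp [Set.indicator, h1, h2, Set.mem_prod]
    rw [heq]
    have hint2 : Integrable (fun p : Ω × Ω =>
        Set.indicator (A n) 1 p.1 * (Set.indicator (A n) 1 p.2 * W p.1 p.2)) (μ.prod μ) := by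
      refine my_integrable_of_bdd (C := 1)
        (((hindm _ (hA n)).comp measurable_fst).mul
          (((hindm _ (hA n)).comp measurable_snd).mul hWm2)).aestronglyMeasurable
        (ae_of_all _ fun p => ?_)
      rw [abs_mul]
      refine mul_le_one₀ (hindbd _ _) (abs_nonneg _) ?_
      rw [abs_mul]
      exact mul_le_one₀ (hindbd _ _) (abs_nonneg _) (hWabs _ _)
    rw [MeasureTheory.integral_prod _ hint2]
    refine integral_congr_ae (ae_of_all _ fun x => ?_)
    show (∫ y, (A n).indicator 1 x * ((A n).indicator 1 y * W x y) ∂μ)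
      = (A n).indicator 1 x * Gn n x
    exact integral_const_mul _ _
  -- Step 4 : identify the limit
  have hGint : Integrable G μ :=
    my_integrable_of_bdd hGm.aestronglyMeasurable (ae_of_all _ hGbd)
  have hdiffint : ∀ n, Integrable (fun x => Set.indicator (A n) 1 x * (Gn n x - G x)) μ := by
    intro n
    refine my_integrable_of_bdd (C := 3)
      ((hindm _ (hA n)).mul ((hGnm n).sub hGm)).aestronglyMeasurable
      (ae_of_all _ fun x => ?_)
    rw [abs_mul]
    calc |Set.indicator (A n) 1 x| * |Gn n x - G x| ≤ 1 * (|Gn n x| + |G x|) :=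
        mul_le_mul (hindbd _ x) (abs_sub _ _) (abs_nonneg _) zero_le_one
      _ ≤ 1 * (1 + 2) := by
        have := add_le_add (hGnbd n x) (hGbd x); linarith
      _ = 3 := by norm_num
  have hprodint : ∀ n, Integrable (fun x => Set.indicator (A n) 1 x * G x) μ := by
    intro n
    refine my_integrable_of_bdd (C := 2)
      ((hindm _ (hA n)).mul hGm).aestronglyMeasurable (ae_of_all _ fun x => ?_)
    rw [abs_mul]
    calc |Set.indicator (A n) 1 x| * |G x| ≤ 1 * 2 :=
        mul_le_mul (hindbd _ x) (hGbd x) (abs_nonneg _) zero_le_one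
      _ = 2 := by norm_num
  have hsplit : ∀ n, ∫ x, Set.indicator (A n) 1 x * Gn n x ∂μ
      = (∫ x, Set.indicator (A n) 1 x * (Gn n x - G x) ∂μ)
        + ∫ x, Set.indicator (A n) 1 x * G x ∂μ := by
    intro n
    rw [← integral_add (hdiffint n) (hprodint n)]
    exact integral_congr_ae (ae_of_all _ fun x => by ring)
  have t1 : Tendsto (fun n => ∫ x, Set.indicator (A n) 1 x * (Gn n x - G x) ∂μ)
      atTop (nhds 0) := by
    refine squeeze_zero_norm (fun n => ?_) hL1
    calc ‖∫ x, Set.indicator (A n) 1 x * (Gn n x - G x) ∂μ‖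
        ≤ ∫ x, ‖Set.indicator (A n) 1 x * (Gn n x - G x)‖ ∂μ := norm_integral_le_integral_norm _
      _ ≤ ∫ x, |Gn n x - G x| ∂μ := by
        refine integral_mono ((hdiffint n).norm) ?_ (fun x => ?_)
        · exact my_integrable_of_bdd (((hGnm n).sub hGm).abs).aestronglyMeasurable (C := 3)
            (ae_of_all _ fun x => by
              rw [abs_abs]
              calc |Gn n x - G x| ≤ |Gn n x| + |G x| := abs_sub _ _
                _ ≤ 3 := by have := add_le_add (hGnbd n x) (hGbd x); linarith)
        · rw [Real.norm_eq_abs, abs_mul]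
          calc |Set.indicator (A n) 1 x| * |Gn n x - G x| ≤ 1 * |Gn n x - G x| :=
              mul_le_mul_of_nonneg_right (hindbd _ x) (abs_nonneg _)
            _ = |Gn n x - G x| := one_mul _
  have hmain : Tendsto (fun n => ∫ x, Set.indicator (A n) 1 x * Gn n x ∂μ)
      atTop (nhds (∫ x, f x * G x ∂μ)) := by
    have := (t1.add (hweak G hGint))
    rw [zero_add] at this
    exact Tendsto.congr (fun n => (hsplit n).symm) this
  have t3 : Tendsto (fun n => ∫ x, Set.indicator (A n) 1 x * Gn n x ∂μ) atTop (nhds 0) :=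
    Tendsto.congr hrw hint
  have hz : ∫ x, f x * G x ∂μ = 0 := tendsto_nhds_unique hmain t3
  -- Step 5 : conclude via the product integral
  have q1 : ∀ᵐ z ∂(μ.prod μ), 0 ≤ f z.1 ∧ f z.1 ≤ 2 :=
    Measure.quasiMeasurePreserving_fst.tendsto_ae.eventually hbd
  have q2 : ∀ᵐ z ∂(μ.prod μ), 0 ≤ f z.2 ∧ f z.2 ≤ 2 :=
    Measure.quasiMeasurePreserving_snd.tendsto_ae.eventually hbd
  set Φ : Ω × Ω → ℝ := fun z => f z.1 * (f z.2 * W z.1 z.2) with hΦdef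
  have hΦm : Measurable Φ := (hf.comp measurable_fst).mul ((hf.comp measurable_snd).mul hWm2)
  have hΦnn : 0 ≤ᵐ[μ.prod μ] Φ := by
    filter_upwards [q1, q2] with z h1 h2
    exact mul_nonneg h1.1 (mul_nonneg h2.1 (hW0 _ _))
  have hΦint : Integrable Φ (μ.prod μ) := by
    refine my_integrable_of_bdd hΦm.aestronglyMeasurable (C := 4) ?_
    filter_upwards [q1, q2] with z h1 h2
    show |f z.1 * (f z.2 * W z.1 z.2)| ≤ 4
    rw [abs_mul, abs_mul]
    have e1 : |f z.1| ≤ 2 := abs_le.2 ⟨by linarith [h1.1], h1.2⟩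
    have e2 : |f z.2| ≤ 2 := abs_le.2 ⟨by linarith [h2.1], h2.2⟩
    have e3 : |f z.2| * |W z.1 z.2| ≤ 2 * 1 :=
      mul_le_mul e2 (hWabs _ _) (abs_nonneg _) (by norm_num)
    calc |f z.1| * (|f z.2| * |W z.1 z.2|) ≤ 2 * (2 * 1) :=
        mul_le_mul e1 e3 (by positivity) (by norm_num)
      _ = 4 := by norm_num
  have hiter : ∫ z, Φ z ∂(μ.prod μ) = ∫ x, f x * G x ∂μ := by
    rw [MeasureTheory.integral_prod _ hΦint]
    refine integral_congr_ae (ae_of_all _ fun x => ?_)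
    show (∫ y, f x * (f y * W x y) ∂μ) = f x * G x
    exact integral_const_mul _ _
  have hΦ0 : Φ =ᵐ[μ.prod μ] 0 :=
    (integral_eq_zero_iff_of_nonneg_ae hΦnn hΦint).1 (by rw [hiter]; exact hz)
  refine ⟨measurableSet_support hf, ?_⟩
  filter_upwards [hΦ0] with z h0 h1 h2
  rw [Function.mem_support] at h1 h2
  have h0' : f z.1 * (f z.2 * W z.1 z.2) = 0 := h0
  rcases mul_eq_zero.1 h0' with h | h
  · exact absurd h h1
  · rcases mul_eq_zero.1 h with h' | h'
    · exact absurd h' h2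
    · exact h'
end

section
/- Let Wₙ be a sequence of graphons on Ω converging in cut-norm to a graphon W, and let Iₙ ⊆ Ω be an independent set in Wₙ for each n. If the indicator functions 1_{Iₙ} converge weak* to a function f, then supp(f) is an independent set in W. -/
open MeasureTheory ENNReal Filter
open scoped Classical

open MeasureTheory ENNReal Filter

lemma aux_int {Ω : Type*} [MeasurableSpace Ω] {μ : Measure Ω} [IsFiniteMeasure μ] {g : Ω → ℝ}
    (hm : AEStronglyMeasurable g μ) {C : ℝ} (hC : ∀ᵐ x ∂μ, |g x| ≤ C) : Integrable g μ :=
  Integrable.mono' (integrable_const C) hm (by simpa [Real.norm_eq_abs] using hC)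

lemma setint_le_one {Ω : Type*} [MeasurableSpace Ω] (μ : Measure Ω) [IsProbabilityMeasure μ]
    (U : Ω → Ω → ℝ) (hUm : Measurable (Function.uncurry U)) (hU : ∀ x y, |U x y| ≤ 1)
    (S T : Set Ω) :
    |∫ p in S ×ˢ T, U p.1 p.2 ∂(μ.prod μ)| ≤ 1 := by
  have h := norm_setIntegral_le_of_norm_le_const (μ := μ.prod μ) (s := S ×ˢ T) (C := 1)
    (f := fun p => U p.1 p.2)
    (measure_lt_top _ _) (fun p _ => by simpa [Real.norm_eq_abs] using hU p.1 p.2)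
  calc |∫ p in S ×ˢ T, U p.1 p.2 ∂(μ.prod μ)| ≤ 1 * ((μ.prod μ) (S ×ˢ T)).toReal := h
    _ ≤ 1 * 1 := by
        have : ((μ.prod μ) (S ×ˢ T)).toReal ≤ 1 :=
          ENNReal.toReal_le_of_le_ofReal zero_le_one
            (by simpa using prob_le_one (μ := μ.prod μ) (s := S ×ˢ T))
        nlinarith [abs_nonneg (∫ p in S ×ˢ T, U p.1 p.2 ∂(μ.prod μ))]
    _ = 1 := by ring

lemma le_cutNorm {Ω : Type*} [MeasurableSpace Ω] (μ : Measure Ω) [IsProbabilityMeasure μ]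
    (U : Ω → Ω → ℝ) (hUm : Measurable (Function.uncurry U)) (hU : ∀ x y, |U x y| ≤ 1)
    {S T : Set Ω} (hS : MeasurableSet S) (hT : MeasurableSet T) :
    |∫ p in S ×ˢ T, U p.1 p.2 ∂(μ.prod μ)| ≤ cutNorm μ U := by
  have bdd : ∀ S' T' : {S : Set Ω // MeasurableSet S},
      |∫ p in S'.1 ×ˢ T'.1, U p.1 p.2 ∂(μ.prod μ)| ≤ 1 :=
    fun S' T' => setint_le_one μ U hUm hU S'.1 T'.1
  have h1 : |∫ p in S ×ˢ T, U p.1 p.2 ∂(μ.prod μ)|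
      ≤ ⨆ T' : {T : Set Ω // MeasurableSet T}, |∫ p in S ×ˢ T'.1, U p.1 p.2 ∂(μ.prod μ)| :=
    le_ciSup (f := fun T' : {T : Set Ω // MeasurableSet T} =>
        |∫ p in S ×ˢ T'.1, U p.1 p.2 ∂(μ.prod μ)|)
      ⟨1, by rintro _ ⟨T', rfl⟩; exact bdd ⟨S, hS⟩ T'⟩ ⟨T, hT⟩
  refine h1.trans ?_
  exact le_ciSup (f := fun S' : {S : Set Ω // MeasurableSet S} =>
      ⨆ T' : {T : Set Ω // MeasurableSet T}, |∫ p in S'.1 ×ˢ T'.1, U p.1 p.2 ∂(μ.prod μ)|)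
    ⟨1, by rintro _ ⟨S', rfl⟩; exact ciSup_le (fun T' => bdd S' T')⟩ ⟨S, hS⟩


theorem stmt_2 {Ω : Type*} [MeasurableSpace Ω] (μ : Measure Ω) [IsProbabilityMeasure μ]
    [NullSingletonClass μ] {W : Ω → Ω → ℝ} (hW : IsGraphon W) (Wn : ℕ → Ω → Ω → ℝ)
    (hWn : ∀ n, IsGraphon (Wn n))
    (hconv : Tendsto (fun n => cutNorm μ (fun x y => Wn n x y - W x y)) atTop (nhds 0))
    (I : ℕ → Set Ω) (hI : ∀ n, IsIndepSet μ (Wn n) (I n))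
    (f : Ω → ℝ) (hf : Measurable f)
    (hweak : ∀ g : Ω → ℝ, Integrable g μ →
      Tendsto (fun n => ∫ x, Set.indicator (I n) 1 x * g x ∂μ) atTop
        (nhds (∫ x, f x * g x ∂μ))) :
    IsIndepSet μ W (Function.support f) := by
  classical
  obtain ⟨hWmeas, hWsymm, hW01⟩ := hW
  have hWnn : ∀ x y, 0 ≤ W x y := fun x y => (hW01 x y).1
  have hWle : ∀ x y, |W x y| ≤ 1 :=
    fun x y => abs_le.2 ⟨by linarith [(hW01 x y).1], (hW01 x y).2⟩
  have hImeas : ∀ n, MeasurableSet (I n) := fun n => (hI n).1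
  set u : ℕ → Ω → ℝ := fun n => Set.indicator (I n) 1 with hu_def
  have humeas : ∀ n, Measurable (u n) := fun n => measurable_one.indicator (hImeas n)
  have hu0 : ∀ n x, 0 ≤ u n x := fun n x =>
    Set.indicator_nonneg (fun _ _ => zero_le_one) x
  have hu1 : ∀ n x, u n x ≤ 1 := by
    intro n x
    by_cases hx : x ∈ I n <;> simp [hu_def, Set.indicator, hx]
  have hweak' : ∀ g : Ω → ℝ, Integrable g μ →
      Tendsto (fun n => ∫ x, u n x * g x ∂μ) atTop (nhds (∫ x, f x * g x ∂μ)) :=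
    fun g hg => hweak g hg
  -- Step 1: 0 ≤ f ≤ 1 a.e.
  have key_null : ∀ (B : Set Ω), MeasurableSet B → ∀ c : ℝ,
      (∀ x ∈ B, |f x| ≤ c) → (∀ x ∈ B, ∀ n, u n x * 1 ≤ 0 ∨ (1:ℝ) ≤ 0) → True := fun _ _ _ _ _ => trivial
  have hneg_null : ∀ c : ℕ, μ ({x | f x < 0} ∩ {x | -(c:ℝ) ≤ f x}) = 0 := by
    intro c
    set B := {x | f x < 0} ∩ {x | -(c:ℝ) ≤ f x} with hB
    have hBm : MeasurableSet B :=
      (measurableSet_lt hf measurable_const).inter (measurableSet_le measurable_const hf)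
    have hgint : Integrable (B.indicator (1 : Ω → ℝ)) μ := (integrable_const (1:ℝ)).indicator hBm
    have hlim := hweak' _ hgint
    have hnn : ∀ n, 0 ≤ ∫ x, u n x * B.indicator 1 x ∂μ := fun n =>
      integral_nonneg fun x =>
        mul_nonneg (hu0 n x) (Set.indicator_nonneg (fun _ _ => zero_le_one) x)
    have h2 : 0 ≤ ∫ x, f x * B.indicator 1 x ∂μ :=
      ge_of_tendsto hlim (Eventually.of_forall hnn)
    have hptnn : ∀ x, 0 ≤ -(f x * B.indicator 1 x) := by
      intro x
      by_cases hx : x ∈ B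
      · have hfx : f x < 0 := hx.1
        simp only [Set.indicator_of_mem hx, Pi.one_apply, mul_one]
        linarith
      · simp [Set.indicator_of_notMem hx]
    have hint : Integrable (fun x => f x * B.indicator 1 x) μ := by
      refine aux_int ((hf.mul (measurable_one.indicator hBm)).aestronglyMeasurable)
        (C := (c:ℝ)) (Eventually.of_forall ?_)
      intro x
      have hc0 : (0:ℝ) ≤ (c:ℝ) := Nat.cast_nonneg c
      by_cases hx : x ∈ B
      · have h1 : f x < 0 := hx.1
        have h2' : -(c:ℝ) ≤ f x := hx.2
        simp only [Set.indicator_of_mem hx, Pi.one_apply, mul_one]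
        rw [abs_le]; constructor <;> linarith
      · simp [Set.indicator_of_notMem hx, hc0]
    have hzero : ∫ x, -(f x * B.indicator 1 x) ∂μ = 0 := by
      rw [integral_neg]
      have h3 : 0 ≤ ∫ x, -(f x * B.indicator 1 x) ∂μ := integral_nonneg hptnn
      rw [integral_neg] at h3
      linarith
    have hae := (integral_eq_zero_iff_of_nonneg hptnn hint.neg).mp hzero
    have hnullset : μ {x | ¬ (-(f x * B.indicator 1 x) = 0)} = 0 := by
      have := hae
      rw [EventuallyEq, ae_iff] at this
      simpa using this
    refine measure_mono_null ?_ hnullset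
    intro x hx
    have hfx : f x < 0 := hx.1
    simp only [Set.mem_setOf_eq, Set.indicator_of_mem hx, Pi.one_apply, mul_one]
    intro hcon
    nlinarith
  have hpos_null : ∀ c : ℕ, μ ({x | 1 < f x} ∩ {x | f x ≤ (c:ℝ)}) = 0 := by
    intro c
    set B := {x | 1 < f x} ∩ {x | f x ≤ (c:ℝ)} with hB
    have hBm : MeasurableSet B :=
      (measurableSet_lt measurable_const hf).inter (measurableSet_le hf measurable_const)
    have hgint : Integrable (B.indicator (1 : Ω → ℝ)) μ := (integrable_const (1:ℝ)).indicator hBm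
    have hlim := hweak' _ hgint
    have hub : ∀ n, ∫ x, u n x * B.indicator 1 x ∂μ ≤ ∫ x, B.indicator 1 x ∂μ := by
      intro n
      refine integral_mono_of_nonneg (Eventually.of_forall fun x =>
        mul_nonneg (hu0 n x) (Set.indicator_nonneg (fun _ _ => zero_le_one) x)) hgint
        (Eventually.of_forall fun x => ?_)
      have hind : (0:ℝ) ≤ B.indicator 1 x := Set.indicator_nonneg (fun _ _ => zero_le_one) x
      show u n x * B.indicator 1 x ≤ B.indicator 1 x
      nlinarith [mul_nonneg (sub_nonneg.2 (hu1 n x)) hind]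
    have h2 : ∫ x, f x * B.indicator 1 x ∂μ ≤ ∫ x, B.indicator 1 x ∂μ :=
      le_of_tendsto hlim (Eventually.of_forall hub)
    have hint : Integrable (fun x => f x * B.indicator 1 x) μ := by
      refine aux_int ((hf.mul (measurable_one.indicator hBm)).aestronglyMeasurable)
        (C := (c:ℝ)) (Eventually.of_forall ?_)
      intro x
      have hc0 : (0:ℝ) ≤ (c:ℝ) := Nat.cast_nonneg c
      by_cases hx : x ∈ B
      · have h1 : (1:ℝ) < f x := hx.1
        have h2' : f x ≤ (c:ℝ) := hx.2
        simp only [Set.indicator_of_mem hx, Pi.one_apply, mul_one]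
        rw [abs_le]; constructor <;> linarith
      · simp [Set.indicator_of_notMem hx, hc0]
    have hptnn : ∀ x, 0 ≤ (f x - 1) * B.indicator 1 x := by
      intro x
      by_cases hx : x ∈ B
      · have hfx : 1 < f x := hx.1
        simp only [Set.indicator_of_mem hx, Pi.one_apply, mul_one]
        linarith
      · simp [Set.indicator_of_notMem hx]
    have hint2 : Integrable (fun x => (f x - 1) * B.indicator 1 x) μ := by
      have : (fun x => (f x - 1) * B.indicator 1 x)
          = fun x => f x * B.indicator 1 x - B.indicator 1 x := by
        funext x
        by_cases hx : x ∈ B <;>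
          simp [Set.indicator_of_mem, Set.indicator_of_notMem, hx] <;> ring
      rw [this]
      exact hint.sub hgint
    have hzero : ∫ x, (f x - 1) * B.indicator 1 x ∂μ = 0 := by
      have heq : ∫ x, (f x - 1) * B.indicator 1 x ∂μ
          = ∫ x, f x * B.indicator 1 x ∂μ - ∫ x, B.indicator 1 x ∂μ := by
        rw [← integral_sub hint hgint]
        congr 1
        funext x
        by_cases hx : x ∈ B <;>
          simp [Set.indicator_of_mem, Set.indicator_of_notMem, hx] <;> ring
      have h3 : 0 ≤ ∫ x, (f x - 1) * B.indicator 1 x ∂μ := integral_nonneg hptnn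
      linarith [heq ▸ h3, heq, h2, h3]
    have hae := (integral_eq_zero_iff_of_nonneg hptnn hint2).mp hzero
    have hnullset : μ {x | ¬ ((f x - 1) * B.indicator 1 x = 0)} = 0 := by
      have := hae
      rw [EventuallyEq, ae_iff] at this
      simpa using this
    refine measure_mono_null ?_ hnullset
    intro x hx
    have hfx : 1 < f x := hx.1
    simp only [Set.mem_setOf_eq, Set.indicator_of_mem hx, Pi.one_apply, mul_one]
    intro hcon
    nlinarith
  have hf0 : ∀ᵐ x ∂μ, 0 ≤ f x := by
    rw [ae_iff]
    have hcover : {x | ¬ 0 ≤ f x} ⊆ ⋃ c : ℕ, ({x | f x < 0} ∩ {x | -(c:ℝ) ≤ f x}) := by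
      intro x hx
      rw [Set.mem_setOf_eq, not_le] at hx
      obtain ⟨c, hc⟩ := exists_nat_ge (-(f x))
      exact Set.mem_iUnion.2 ⟨c, hx, by simp only [Set.mem_setOf_eq]; linarith⟩
    exact measure_mono_null hcover (measure_iUnion_null hneg_null)
  have hf1 : ∀ᵐ x ∂μ, f x ≤ 1 := by
    rw [ae_iff]
    have hcover : {x | ¬ f x ≤ 1} ⊆ ⋃ c : ℕ, ({x | 1 < f x} ∩ {x | f x ≤ (c:ℝ)}) := by
      intro x hx
      rw [Set.mem_setOf_eq, not_le] at hx
      obtain ⟨c, hc⟩ := exists_nat_ge (f x)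
      exact Set.mem_iUnion.2 ⟨c, hx, by simp only [Set.mem_setOf_eq]; linarith⟩
    exact measure_mono_null hcover (measure_iUnion_null hpos_null)
  have hfabs : ∀ᵐ x ∂μ, |f x| ≤ 1 := by
    filter_upwards [hf0, hf1] with x h0 h1
    rw [abs_of_nonneg h0]; exact h1
  have hfint : Integrable f μ := aux_int hf.aestronglyMeasurable hfabs
  set C : ℝ := ∫ x, |f x| ∂μ with hC_def
  have hC0 : 0 ≤ C := integral_nonneg fun x => abs_nonneg _
  have hWsec : ∀ x, Measurable (fun y => W x y) := fun x => hWmeas.of_uncurry_left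
  -- the auxiliary functions h and hn
  set h : Ω → ℝ := fun x => ∫ y, f y * W x y ∂μ with hh_def
  set hn : ℕ → Ω → ℝ := fun n x => ∫ y, u n y * W x y ∂μ with hhn_def
  have hGmeas : Measurable (fun p : Ω × Ω => f p.2 * W p.1 p.2) :=
    (hf.comp measurable_snd).mul hWmeas
  have h_sm : StronglyMeasurable h :=
    MeasureTheory.StronglyMeasurable.integral_prod_right
      (f := fun x y => f y * W x y) hGmeas.stronglyMeasurable
  have hn_sm : ∀ n, StronglyMeasurable (hn n) := fun n =>
    MeasureTheory.StronglyMeasurable.integral_prod_right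
      (f := fun x y => u n y * W x y)
      (((humeas n).comp measurable_snd).mul hWmeas).stronglyMeasurable
  have hsec_int : ∀ n x, Integrable (fun y => u n y * W x y) μ := fun n x =>
    aux_int (((humeas n).mul (hWsec x)).aestronglyMeasurable)
      (C := 1) (Eventually.of_forall fun y => by
        rw [abs_mul]
        have := hu0 n y
        have := hu1 n y
        have := hWle x y
        have := abs_nonneg (W x y)
        nlinarith [abs_of_nonneg (hu0 n y)])
  have hfW_int : ∀ x, Integrable (fun y => f y * W x y) μ := fun x =>
    Integrable.mono' hfint.abs ((hf.mul (hWsec x)).aestronglyMeasurable)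
      (Eventually.of_forall fun y => by
        rw [Real.norm_eq_abs, abs_mul]
        nlinarith [abs_nonneg (f y), abs_nonneg (W x y), hWle x y])
  have hhn_b : ∀ n x, |hn n x| ≤ 1 := by
    intro n x
    have step1 : |hn n x| ≤ ∫ y, |u n y * W x y| ∂μ := by
      simpa only [Real.norm_eq_abs] using norm_integral_le_integral_norm (μ := μ) (fun y => u n y * W x y)
    refine step1.trans ?_
    calc ∫ y, |u n y * W x y| ∂μ ≤ ∫ _y, (1:ℝ) ∂μ := by
          refine integral_mono_of_nonneg (Eventually.of_forall fun y => abs_nonneg _)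
            (integrable_const 1) (Eventually.of_forall fun y => ?_)
          show |u n y * W x y| ≤ 1
          rw [abs_mul]
          have := hu0 n y
          have := hu1 n y
          have := hWle x y
          have := abs_nonneg (W x y)
          nlinarith [abs_of_nonneg (hu0 n y)]
      _ = 1 := by simp
  have hh_b : ∀ x, |h x| ≤ C := by
    intro x
    have step1 : |h x| ≤ ∫ y, |f y * W x y| ∂μ := by
      simpa only [Real.norm_eq_abs] using norm_integral_le_integral_norm (μ := μ) (fun y => f y * W x y)
    refine step1.trans ?_
    refine integral_mono_of_nonneg (Eventually.of_forall fun y => abs_nonneg _)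
      hfint.abs (Eventually.of_forall fun y => ?_)
    show |f y * W x y| ≤ |f y|
    rw [abs_mul]
    nlinarith [abs_nonneg (f y), abs_nonneg (W x y), hWle x y]
  have h_int : Integrable h μ := aux_int h_sm.aestronglyMeasurable (Eventually.of_forall hh_b)
  -- pointwise convergence of hn to h
  have hpt : ∀ x, Tendsto (fun n => hn n x) atTop (nhds (h x)) := fun x =>
    hweak' (fun y => W x y)
      (aux_int (hWsec x).aestronglyMeasurable (Eventually.of_forall fun y => hWle x y))
  -- L¹ convergence of hn to h
  have hdiff_int : ∀ n, Integrable (fun x => hn n x - h x) μ := fun n =>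
    aux_int ((hn_sm n).sub h_sm).aestronglyMeasurable (C := 1 + C)
      (Eventually.of_forall fun x => by
        rw [sub_eq_add_neg]
        exact (abs_add_le _ _).trans (by rw [abs_neg]; exact add_le_add (hhn_b n x) (hh_b x)))
  have habs_int : ∀ n, Integrable (fun x => |hn n x - h x|) μ := fun n => (hdiff_int n).abs
  have T1 : Tendsto (fun n => ∫ x, |hn n x - h x| ∂μ) atTop (nhds 0) := by
    have := tendsto_integral_of_dominated_convergence (μ := μ)
      (F := fun n x => |hn n x - h x|) (f := fun _ => (0:ℝ)) (bound := fun _ => 1 + C)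
      (fun n => (continuous_abs.comp_stronglyMeasurable
        ((hn_sm n).sub h_sm)).aestronglyMeasurable)
      (integrable_const (1 + C))
      (fun n => Eventually.of_forall fun x => by
        rw [Real.norm_eq_abs, abs_abs, sub_eq_add_neg]
        exact (abs_add_le _ _).trans (by rw [abs_neg]; exact add_le_add (hhn_b n x) (hh_b x)))
      (Eventually.of_forall fun x => by
        simpa using ((hpt x).sub (tendsto_const_nhds (x := h x))).abs)
    simpa using this
  have T2 : Tendsto (fun n => ∫ x, u n x * h x ∂μ) atTop (nhds (∫ x, f x * h x ∂μ)) :=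
    hweak' h h_int
  -- the sequence of double integrals
  have hun_hn_int : ∀ n, Integrable (fun x => u n x * hn n x) μ := fun n =>
    aux_int ((humeas n).mul (hn_sm n).measurable).aestronglyMeasurable (C := 1)
      (Eventually.of_forall fun x => by
        rw [abs_mul]
        nlinarith [abs_nonneg (hn n x), hhn_b n x, abs_of_nonneg (hu0 n x), hu1 n x, hu0 n x])
  have hun_h_int : ∀ n, Integrable (fun x => u n x * h x) μ := fun n =>
    aux_int ((humeas n).mul h_sm.measurable).aestronglyMeasurable (C := C)
      (Eventually.of_forall fun x => by
        rw [abs_mul]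
        nlinarith [abs_nonneg (h x), hh_b x, abs_of_nonneg (hu0 n x), hu1 n x, hu0 n x])
  have hd0 : Tendsto (fun n => (∫ x, u n x * hn n x ∂μ) - ∫ x, u n x * h x ∂μ)
      atTop (nhds 0) := by
    refine squeeze_zero_norm (fun n => ?_) T1
    rw [Real.norm_eq_abs]
    have heq : (∫ x, u n x * hn n x ∂μ) - ∫ x, u n x * h x ∂μ
        = ∫ x, u n x * (hn n x - h x) ∂μ := by
      rw [← integral_sub (hun_hn_int n) (hun_h_int n)]
      congr 1
      funext x
      ring
    rw [heq]
    have step1 : |∫ x, u n x * (hn n x - h x) ∂μ| ≤ ∫ x, |u n x * (hn n x - h x)| ∂μ := by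
      simpa only [Real.norm_eq_abs] using
        norm_integral_le_integral_norm (μ := μ) (fun x => u n x * (hn n x - h x))
    refine step1.trans ?_
    refine integral_mono_of_nonneg (Eventually.of_forall fun x => abs_nonneg _)
      (habs_int n) (Eventually.of_forall fun x => ?_)
    show |u n x * (hn n x - h x)| ≤ |hn n x - h x|
    rw [abs_mul]
    nlinarith [abs_nonneg (hn n x - h x), abs_of_nonneg (hu0 n x), hu1 n x, hu0 n x]
  have Tmain : Tendsto (fun n => ∫ x, u n x * hn n x ∂μ) atTop (nhds (∫ x, f x * h x ∂μ)) := by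
    have := hd0.add T2
    simpa using this
  -- Fubini: identify the iterated integral with the double integral over Iₙ × Iₙ
  have hprod_fin : IsFiniteMeasure (μ.prod μ) := inferInstance
  have hGn_meas : ∀ n, Measurable (fun p : Ω × Ω => u n p.1 * (u n p.2 * W p.1 p.2)) :=
    fun n => ((humeas n).comp measurable_fst).mul (((humeas n).comp measurable_snd).mul hWmeas)
  have hGn_int : ∀ n, Integrable (fun p : Ω × Ω => u n p.1 * (u n p.2 * W p.1 p.2)) (μ.prod μ) :=
    fun n => aux_int (hGn_meas n).aestronglyMeasurable (C := 1)
      (Eventually.of_forall fun p => by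
        rw [abs_mul, abs_mul, abs_of_nonneg (hu0 n p.1), abs_of_nonneg (hu0 n p.2)]
        exact mul_le_one₀ (hu1 n p.1) (mul_nonneg (hu0 n p.2) (abs_nonneg _))
          (mul_le_one₀ (hu1 n p.2) (abs_nonneg _) (hWle p.1 p.2)))
  have hJ_eq1 : ∀ n, (∫ p, u n p.1 * (u n p.2 * W p.1 p.2) ∂(μ.prod μ))
      = ∫ x, u n x * hn n x ∂μ := by
    intro n
    rw [MeasureTheory.integral_prod _ (hGn_int n)]
    refine integral_congr_ae (Eventually.of_forall fun x => ?_)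
    exact integral_const_mul (u n x) (fun y => u n y * W x y)
  have hJ_eq2 : ∀ n, (∫ p, u n p.1 * (u n p.2 * W p.1 p.2) ∂(μ.prod μ))
      = ∫ p in (I n) ×ˢ (I n), W p.1 p.2 ∂(μ.prod μ) := by
    intro n
    rw [← integral_indicator ((hImeas n).prod (hImeas n))]
    refine integral_congr_ae (Eventually.of_forall fun p => ?_)
    by_cases h1 : p.1 ∈ I n <;> by_cases h2 : p.2 ∈ I n <;>
      simp [hu_def, Set.indicator, Set.mem_prod, h1, h2]
  -- the W-integral over Iₙ × Iₙ tends to 0 via the cut norm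
  have hW_int : Integrable (fun p : Ω × Ω => W p.1 p.2) (μ.prod μ) :=
    aux_int hWmeas.aestronglyMeasurable (C := 1)
      (Eventually.of_forall fun p => hWle p.1 p.2)
  have hWn_int : ∀ n, Integrable (fun p : Ω × Ω => Wn n p.1 p.2) (μ.prod μ) := fun n =>
    aux_int (hWn n).1.aestronglyMeasurable (C := 1)
      (Eventually.of_forall fun p => by
        have := ((hWn n).2.2 p.1 p.2).1
        have := ((hWn n).2.2 p.1 p.2).2
        rw [abs_le]; constructor <;> linarith)
  have hWn0 : ∀ n, ∫ p in (I n) ×ˢ (I n), Wn n p.1 p.2 ∂(μ.prod μ) = 0 := by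
    intro n
    have h0 : (fun p : Ω × Ω => Wn n p.1 p.2)
        =ᵐ[(μ.prod μ).restrict ((I n) ×ˢ (I n))] 0 := by
      rw [EventuallyEq, ae_restrict_iff' ((hImeas n).prod (hImeas n))]
      filter_upwards [(hI n).2] with p hp hmem
      exact hp hmem.1 hmem.2
    rw [integral_congr_ae h0]
    simp
  have hJW : ∀ n, |∫ p in (I n) ×ˢ (I n), W p.1 p.2 ∂(μ.prod μ)|
      ≤ cutNorm μ (fun x y => Wn n x y - W x y) := by
    intro n
    have hUm : Measurable (Function.uncurry (fun x y => Wn n x y - W x y)) :=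
      (hWn n).1.sub hWmeas
    have hUb : ∀ x y, |Wn n x y - W x y| ≤ 1 := by
      intro x y
      have h1 := ((hWn n).2.2 x y).1
      have h2 := ((hWn n).2.2 x y).2
      have h3 := (hW01 x y).1
      have h4 := (hW01 x y).2
      rw [abs_le]; constructor <;> linarith
    have key := le_cutNorm μ (fun x y => Wn n x y - W x y) hUm hUb (hImeas n) (hImeas n)
    have hsplit : ∫ p in (I n) ×ˢ (I n), (Wn n p.1 p.2 - W p.1 p.2) ∂(μ.prod μ)
        = (∫ p in (I n) ×ˢ (I n), Wn n p.1 p.2 ∂(μ.prod μ))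
          - ∫ p in (I n) ×ˢ (I n), W p.1 p.2 ∂(μ.prod μ) :=
      integral_sub ((hWn_int n).restrict) (hW_int.restrict)
    rw [hsplit, hWn0 n, zero_sub, abs_neg] at key
    exact key
  have hJ0 : Tendsto (fun n => ∫ p in (I n) ×ˢ (I n), W p.1 p.2 ∂(μ.prod μ)) atTop (nhds 0) :=
    squeeze_zero_norm (fun n => by rw [Real.norm_eq_abs]; exact hJW n) hconv
  -- conclude ∫ f·h = 0
  have hfh0 : ∫ x, f x * h x ∂μ = 0 := by
    have heqfun : (fun n => ∫ x, u n x * hn n x ∂μ)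
        = fun n => ∫ p in (I n) ×ˢ (I n), W p.1 p.2 ∂(μ.prod μ) := by
      funext n
      rw [← hJ_eq1 n, hJ_eq2 n]
    rw [heqfun] at Tmain
    exact tendsto_nhds_unique Tmain hJ0
  -- transfer a.e. bounds on f to the product measure
  have hae_fst : ∀ᵐ p ∂(μ.prod μ), 0 ≤ f p.1 ∧ f p.1 ≤ 1 := by
    rw [ae_iff]
    have hset : {p : Ω × Ω | ¬ (0 ≤ f p.1 ∧ f p.1 ≤ 1)}
        = {x | ¬ (0 ≤ f x ∧ f x ≤ 1)} ×ˢ (Set.univ : Set Ω) := by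
      ext p; simp [Set.mem_prod]
    rw [hset, Measure.prod_prod]
    have : μ {x | ¬ (0 ≤ f x ∧ f x ≤ 1)} = 0 := by
      have := hf0.and hf1
      rw [ae_iff] at this
      exact this
    rw [this]
    simp
  have hae_snd : ∀ᵐ p ∂(μ.prod μ), 0 ≤ f p.2 ∧ f p.2 ≤ 1 := by
    rw [ae_iff]
    have hset : {p : Ω × Ω | ¬ (0 ≤ f p.2 ∧ f p.2 ≤ 1)}
        = (Set.univ : Set Ω) ×ˢ {x | ¬ (0 ≤ f x ∧ f x ≤ 1)} := by
      ext p; simp [Set.mem_prod]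
    rw [hset, Measure.prod_prod]
    have : μ {x | ¬ (0 ≤ f x ∧ f x ≤ 1)} = 0 := by
      have := hf0.and hf1
      rw [ae_iff] at this
      exact this
    rw [this]
    simp
  -- the product integrand
  have hGmeas2 : Measurable (fun p : Ω × Ω => f p.1 * (f p.2 * W p.1 p.2)) :=
    (hf.comp measurable_fst).mul ((hf.comp measurable_snd).mul hWmeas)
  have hGint2 : Integrable (fun p : Ω × Ω => f p.1 * (f p.2 * W p.1 p.2)) (μ.prod μ) := by
    refine aux_int hGmeas2.aestronglyMeasurable (C := 1) ?_
    filter_upwards [hae_fst, hae_snd] with p h1 h2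
    rw [abs_mul, abs_mul, abs_of_nonneg h1.1, abs_of_nonneg h2.1]
    exact mul_le_one₀ h1.2 (mul_nonneg h2.1 (abs_nonneg _))
      (mul_le_one₀ h2.2 (abs_nonneg _) (hWle p.1 p.2))
  have hGzero : ∫ p, f p.1 * (f p.2 * W p.1 p.2) ∂(μ.prod μ) = 0 := by
    rw [MeasureTheory.integral_prod _ hGint2]
    rw [← hfh0]
    refine integral_congr_ae (Eventually.of_forall fun x => ?_)
    exact integral_const_mul (f x) (fun y => f y * W x y)
  have hGnn : ∀ᵐ p ∂(μ.prod μ), 0 ≤ f p.1 * (f p.2 * W p.1 p.2) := by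
    filter_upwards [hae_fst, hae_snd] with p h1 h2
    exact mul_nonneg h1.1 (mul_nonneg h2.1 (hWnn p.1 p.2))
  have hGz : (fun p : Ω × Ω => f p.1 * (f p.2 * W p.1 p.2)) =ᵐ[μ.prod μ] 0 :=
    (integral_eq_zero_iff_of_nonneg_ae hGnn hGint2).mp hGzero
  -- conclusion
  constructor
  · have hsupp : Function.support f = (f ⁻¹' {0})ᶜ := by
      ext x; simp [Function.mem_support]
    rw [hsupp]
    exact (hf (measurableSet_singleton (0:ℝ))).compl
  · filter_upwards [hGz] with p hp h1 h2
    have hp0 : f p.1 * (f p.2 * W p.1 p.2) = 0 := hp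
    have hf1' : f p.1 ≠ 0 := h1
    have hf2' : f p.2 ≠ 0 := h2
    rcases mul_eq_zero.1 hp0 with hc | hc
    · exact absurd hc hf1'
    · rcases mul_eq_zero.1 hc with hc' | hc'
      · exact absurd hc' hf2'
      · exact hc'
end

section
/- For every graphon W, the supremum of the measures of independent sets of W is attained; i.e., there exists an independent set I with ν(I) = α(W), where α(W) := sup{ν(A) : A independent in W}. -/
open MeasureTheory ENNReal Filter
open scoped Classical

open MeasureTheory ENNReal Filter

private lemma integrable_of_bdd {δ : Type*} [MeasurableSpace δ] {ρ : Measure δ}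
    [IsFiniteMeasure ρ] {h : δ → ℝ} (hm : AEStronglyMeasurable h ρ) (C : ℝ)
    (hb : ∀ x, |h x| ≤ C) : Integrable h ρ :=
  memLp_one_iff_integrable.mp (MemLp.of_bound hm C
    (Filter.Eventually.of_forall (by simpa [Real.norm_eq_abs] using hb)))

private lemma memℒp_two_of_bdd {δ : Type*} [MeasurableSpace δ] {ρ : Measure δ}
    [IsFiniteMeasure ρ] {h : δ → ℝ} (hm : AEStronglyMeasurable h ρ) (C : ℝ)
    (hb : ∀ x, |h x| ≤ C) : MemLp h 2 ρ :=
  MemLp.of_bound hm C (Filter.Eventually.of_forall (by simpa [Real.norm_eq_abs] using hb))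

private lemma abs_int_le {δ : Type*} [MeasurableSpace δ] (ρ : Measure δ) (h : δ → ℝ) :
    |∫ x, h x ∂ρ| ≤ ∫ x, |h x| ∂ρ := by
  simpa [Real.norm_eq_abs] using norm_integral_le_integral_norm (μ := ρ) h

set_option maxHeartbeats 2000000 in
theorem stmt_3 {Ω : Type*} [MeasurableSpace Ω] (μ : Measure Ω) [IsProbabilityMeasure μ]
    [NullSingletonClass μ] {W : Ω → Ω → ℝ} (hW : IsGraphon W) :
    ∃ I : Set Ω, IsIndepSet μ W I ∧ μ I = indepNum μ W := by
  classical
  obtain ⟨hWm, hWsymm, hWmem⟩ := hW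
  have hW0 : ∀ x y, 0 ≤ W x y := fun x y => (hWmem x y).1
  have hW1 : ∀ x y, W x y ≤ 1 := fun x y => (hWmem x y).2
  have hWabs : ∀ x y, |W x y| ≤ 1 := fun x y => abs_le.mpr ⟨by linarith [hW0 x y], hW1 x y⟩
  set α := indepNum μ W with hα
  have hαle : α ≤ 1 := by
    rw [hα, indepNum]
    exact iSup_le fun A => iSup_le fun _ => prob_le_one
  have hαne : α ≠ ∞ := (lt_of_le_of_lt hαle one_lt_top).ne
  have hempty : IsIndepSet μ W (∅ : Set Ω) := by
    refine ⟨MeasurableSet.empty, Filter.Eventually.of_forall fun p hp => ?_⟩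
    exact absurd hp (Set.notMem_empty _)
  -- choose a sequence of independent sets approaching the supremum
  have hseq : ∀ n : ℕ, ∃ A, IsIndepSet μ W A ∧ α ≤ μ A + 1 / ((n : ℝ≥0∞) + 1) := by
    intro n
    by_cases h : α ≤ 1 / ((n : ℝ≥0∞) + 1)
    · exact ⟨∅, hempty, le_add_left h⟩
    · push_neg at h
      have hpos : (1 : ℝ≥0∞) / ((n : ℝ≥0∞) + 1) ≠ 0 := by
        simp [ENNReal.div_eq_zero_iff]
      have hα0 : α ≠ 0 := (lt_of_le_of_lt zero_le h).ne'
      have hlt : α - 1 / ((n : ℝ≥0∞) + 1) < α :=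
        ENNReal.sub_lt_self hαne hα0 hpos
      rw [hα, indepNum, lt_iSup_iff] at hlt
      obtain ⟨A, hlt⟩ := hlt
      rw [lt_iSup_iff] at hlt
      obtain ⟨hA, hlt⟩ := hlt
      exact ⟨A, hA, by rw [← tsub_le_iff_right]; exact hlt.le⟩
  choose A hind hge using hseq
  have hmle : ∀ B, IsIndepSet μ W B → μ B ≤ α := by
    intro B hB
    rw [hα, indepNum]
    exact le_iSup₂ (f := fun A (_ : IsIndepSet μ W A) => μ A) B hB
  -- real-valued measures converge to α.toReal
  set a := α.toReal with ha
  set m : ℕ → ℝ := fun n => (μ (A n)).toReal with hm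
  have hmlea : ∀ n, m n ≤ a :=
    fun n => ENNReal.toReal_le_toReal (measure_ne_top μ _) hαne |>.mpr (hmle _ (hind n))
  have hmgea : ∀ n : ℕ, a - 1 / ((n : ℝ) + 1) ≤ m n := by
    intro n
    have hfin : (1 : ℝ≥0∞) / ((n : ℝ≥0∞) + 1) ≠ ⊤ :=
      (ENNReal.div_lt_top one_ne_top (by simp)).ne
    have h1 : ((1 : ℝ≥0∞) / ((n : ℝ≥0∞) + 1)).toReal = 1 / ((n : ℝ) + 1) := by
      rw [ENNReal.toReal_div, ENNReal.toReal_add (by simp) one_ne_top]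
      simp
    have h2 := ENNReal.toReal_le_toReal hαne
      (ENNReal.add_ne_top.mpr ⟨measure_ne_top μ _, hfin⟩) |>.mpr (hge n)
    rw [ENNReal.toReal_add (measure_ne_top μ _) hfin, h1] at h2
    linarith
  have htend : Filter.Tendsto m atTop (nhds a) := by
    have hlow : Filter.Tendsto (fun n : ℕ => a - 1 / ((n : ℝ) + 1)) atTop (nhds (a - 0)) :=
      tendsto_const_nhds.sub tendsto_one_div_add_atTop_nhds_zero_nat
    rw [sub_zero] at hlow
    exact tendsto_of_tendsto_of_tendsto_of_le_of_le hlow tendsto_const_nhds hmgea hmlea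
  -- L² machinery
  haveI hfact : Fact ((1 : ℝ≥0∞) ≤ 2) := ⟨one_le_two⟩
  set fseq : ℕ → Lp ℝ 2 μ :=
    fun n => indicatorConstLp 2 (hind n).1 (measure_ne_top μ _) (1 : ℝ) with hfseq
  have hfnorm : ∀ n, ‖fseq n‖ ≤ 1 := by
    intro n
    rw [hfseq]
    rw [norm_indicatorConstLp two_ne_zero ENNReal.ofNat_ne_top]
    simp only [norm_one, one_mul]
    refine Real.rpow_le_one ENNReal.toReal_nonneg ?_ (by norm_num)
    exact ENNReal.toReal_le_toReal (measure_ne_top μ _) one_ne_top |>.mpr prob_le_one |>.trans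
      (by norm_num)
  set K : Submodule ℝ (Lp ℝ 2 μ) :=
    (Submodule.span ℝ (Set.range fseq)).topologicalClosure with hK
  have hKclosed : IsClosed (K : Set (Lp ℝ 2 μ)) := Submodule.isClosed_topologicalClosure _
  haveI : CompleteSpace K := hKclosed.completeSpace_coe
  have hfK : ∀ n, fseq n ∈ K :=
    fun n => Submodule.le_topologicalClosure _ (Submodule.subset_span (Set.mem_range_self n))
  have hKsep : TopologicalSpace.IsSeparable (K : Set (Lp ℝ 2 μ)) := by
    rw [hK, Submodule.topologicalClosure_coe]
    exact ((Set.countable_range fseq).isSeparable.span).closure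
  obtain ⟨T₀, hT₀c, hT₀d⟩ := hKsep
  set T : Set (Lp ℝ 2 μ) := insert 0 T₀ with hT
  have hTc : T.Countable := hT₀c.insert 0
  have hTd : (K : Set (Lp ℝ 2 μ)) ⊆ closure T :=
    hT₀d.trans (closure_mono (Set.subset_insert _ _))
  obtain ⟨d, hdrange⟩ := hTc.exists_eq_range ⟨0, Set.mem_insert _ _⟩
  -- diagonal extraction
  set u : ℕ → ℕ → ℝ := fun n k => (inner ℝ (fseq n) (d k) : ℝ) with hu
  have hucpt : IsCompact (Set.pi Set.univ fun k => Set.Icc (-‖d k‖) ‖d k‖) :=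
    isCompact_univ_pi fun k => isCompact_Icc
  have humem : ∀ n, u n ∈ Set.pi Set.univ fun k => Set.Icc (-‖d k‖) ‖d k‖ := by
    intro n k _
    have h1 : |(inner ℝ (fseq n) (d k) : ℝ)| ≤ ‖d k‖ := by
      refine (abs_real_inner_le_norm _ _).trans ?_
      calc ‖fseq n‖ * ‖d k‖ ≤ 1 * ‖d k‖ :=
            mul_le_mul_of_nonneg_right (hfnorm n) (norm_nonneg _)
        _ = ‖d k‖ := one_mul _
    exact ⟨neg_le_of_abs_le h1, le_of_abs_le h1⟩
  obtain ⟨v, hv, φ, hφmono, hφtend⟩ := hucpt.tendsto_subseq humem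
  have hdk : ∀ k, Filter.Tendsto (fun n => (inner ℝ (fseq (φ n)) (d k) : ℝ)) atTop (nhds (v k)) :=
    fun k => tendsto_pi_nhds.mp hφtend k
  -- convergence against every test function
  have hcauchy : ∀ g : Lp ℝ 2 μ,
      ∃ L, Filter.Tendsto (fun n => (inner ℝ (fseq (φ n)) (g) : ℝ)) atTop (nhds L) := by
    intro g
    set h : Lp ℝ 2 μ := (K.starProjection g : Lp ℝ 2 μ) with hh
    have hrw : ∀ n, (inner ℝ (fseq (φ n)) (g) : ℝ) = (inner ℝ (fseq (φ n)) (h) : ℝ) := by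
      intro n
      have hperp : g - h ∈ Kᗮ := K.sub_starProjection_mem_orthogonal g
      have h0 : (inner ℝ (fseq (φ n)) (g - h) : ℝ) = 0 :=
        (Submodule.mem_orthogonal K (g - h)).mp hperp (fseq (φ n)) (hfK _)
      rw [inner_sub_right] at h0
      linarith
    have hC : CauchySeq fun n => (inner ℝ (fseq (φ n)) (h) : ℝ) := by
      rw [Metric.cauchySeq_iff]
      intro ε hε
      have hhK : h ∈ (K : Set (Lp ℝ 2 μ)) := Submodule.coe_mem (K.orthogonalProjectionOnto g)
      have hcl := hTd hhK
      rw [Metric.mem_closure_iff] at hcl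
      obtain ⟨t, htT, htd⟩ := hcl (ε / 4) (by positivity)
      obtain ⟨k, rfl⟩ : ∃ k, d k = t := by
        rw [hdrange] at htT; exact htT
      have hck := (hdk k).cauchySeq
      rw [Metric.cauchySeq_iff] at hck
      obtain ⟨N, hN⟩ := hck (ε / 2) (by positivity)
      refine ⟨N, fun p hp q hq => ?_⟩
      have e1 : ∀ n, |(inner ℝ (fseq (φ n)) (h) : ℝ) - (inner ℝ (fseq (φ n)) (d k) : ℝ)| ≤ ε / 4 := by
        intro n
        rw [← inner_sub_right]
        refine (abs_real_inner_le_norm _ _).trans ?_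
        have : ‖h - d k‖ ≤ ε / 4 := by
          rw [← dist_eq_norm]; exact htd.le
        calc ‖fseq (φ n)‖ * ‖h - d k‖ ≤ 1 * (ε / 4) :=
              mul_le_mul (hfnorm _) this (norm_nonneg _) zero_le_one
          _ = ε / 4 := one_mul _
      have e2 := hN p hp q hq
      rw [Real.dist_eq] at e2 ⊢
      have t1 := e1 p
      have t2 := e1 q
      have : (inner ℝ (fseq (φ p)) (h) : ℝ) - (inner ℝ (fseq (φ q)) (h) : ℝ) =
          ((inner ℝ (fseq (φ p)) (h) : ℝ) - (inner ℝ (fseq (φ p)) (d k) : ℝ)) +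
          ((inner ℝ (fseq (φ p)) (d k) : ℝ) - (inner ℝ (fseq (φ q)) (d k) : ℝ)) +
          ((inner ℝ (fseq (φ q)) (d k) : ℝ) - (inner ℝ (fseq (φ q)) (h) : ℝ)) := by ring
      rw [this]
      have := abs_add_three ((inner ℝ (fseq (φ p)) (h) : ℝ) - (inner ℝ (fseq (φ p)) (d k) : ℝ))
        ((inner ℝ (fseq (φ p)) (d k) : ℝ) - (inner ℝ (fseq (φ q)) (d k) : ℝ))
        ((inner ℝ (fseq (φ q)) (d k) : ℝ) - (inner ℝ (fseq (φ q)) (h) : ℝ))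
      refine lt_of_le_of_lt this ?_
      have t3 : |(inner ℝ (fseq (φ q)) (d k) : ℝ) - (inner ℝ (fseq (φ q)) (h) : ℝ)| ≤ ε / 4 := by
        rw [abs_sub_comm]; exact t2
      linarith
    obtain ⟨L, hL⟩ := cauchySeq_tendsto_of_complete hC
    exact ⟨L, by simpa only [hrw] using hL⟩
  choose Λ hΛ using hcauchy
  have hadd : ∀ g₁ g₂, Λ (g₁ + g₂) = Λ g₁ + Λ g₂ := by
    intro g₁ g₂
    refine tendsto_nhds_unique (hΛ (g₁ + g₂)) ?_
    have := (hΛ g₁).add (hΛ g₂)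
    simpa only [inner_add_right] using this
  have hsmul : ∀ (c : ℝ) g, Λ (c • g) = c * Λ g := by
    intro c g
    refine tendsto_nhds_unique (hΛ (c • g)) ?_
    have := (hΛ g).const_mul c
    simpa only [real_inner_smul_right] using this
  have hbound : ∀ g, |Λ g| ≤ ‖g‖ := by
    intro g
    refine le_of_tendsto (hΛ g).abs (Filter.Eventually.of_forall fun n => ?_)
    refine (abs_real_inner_le_norm _ _).trans ?_
    calc ‖fseq (φ n)‖ * ‖g‖ ≤ 1 * ‖g‖ :=
          mul_le_mul_of_nonneg_right (hfnorm _) (norm_nonneg _)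
      _ = ‖g‖ := one_mul _
  set Λlin : Lp ℝ 2 μ →ₗ[ℝ] ℝ :=
    { toFun := Λ, map_add' := hadd, map_smul' := hsmul } with hΛlin
  set Λc : Lp ℝ 2 μ →L[ℝ] ℝ :=
    LinearMap.mkContinuous Λlin 1 (fun g => by
      rw [Real.norm_eq_abs, one_mul]; exact hbound g) with hΛc
  set f : Lp ℝ 2 μ := (InnerProductSpace.toDual ℝ (Lp ℝ 2 μ)).symm Λc with hfdef
  have hflim : ∀ g : Lp ℝ 2 μ,
      Filter.Tendsto (fun n => (inner ℝ (fseq (φ n)) (g) : ℝ)) atTop (nhds (inner ℝ f (g) : ℝ)) := by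
    intro g
    have h1 : (inner ℝ f (g) : ℝ) = Λc g := by
      rw [← InnerProductSpace.toDual_apply_apply, hfdef, LinearIsometryEquiv.apply_symm_apply]
    have h2 : Λc g = Λ g := rfl
    rw [h1, h2]
    exact hΛ g
  -- translation of inner products to integrals
  have hinner_ind : ∀ (n : ℕ) (g : Lp ℝ 2 μ),
      (inner ℝ (fseq n) (g) : ℝ) = ∫ x in A n, g x ∂μ :=
    fun n g => L2.inner_indicatorConstLp_one (hind n).1 (measure_ne_top μ _) g
  have hinner_def : ∀ g h : Lp ℝ 2 μ, (inner ℝ g (h) : ℝ) = ∫ x, g x * h x ∂μ := by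
    intro g h
    rw [L2.inner_def]
    simp [RCLike.inner_apply, mul_comm]
  have hfint : Integrable (⇑f) μ := (Lp.memLp f).integrable one_le_two
  have hfseq_int : ∀ n, Integrable (⇑(fseq n)) μ :=
    fun n => (Lp.memLp (fseq n)).integrable one_le_two
  have hfseq_le1 : ∀ n, ∀ᵐ x ∂μ, (fseq n) x ≤ 1 := by
    intro n
    filter_upwards [indicatorConstLp_coeFn (p := 2) (hs := (hind n).1)
      (hμs := measure_ne_top μ _) (c := (1 : ℝ))] with x hx
    rw [hx]
    classical
    by_cases hxA : x ∈ A n <;> simp [Set.indicator_apply, hxA]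
  have hfseq_nn : ∀ n, ∀ᵐ x ∂μ, 0 ≤ (fseq n) x := by
    intro n
    filter_upwards [indicatorConstLp_coeFn (p := 2) (hs := (hind n).1)
      (hμs := measure_ne_top μ _) (c := (1 : ℝ))] with x hx
    rw [hx]
    exact Set.indicator_nonneg (fun _ _ => zero_le_one) x
  -- bounds on the set integrals of f
  have hfS : ∀ S : Set Ω, MeasurableSet S →
      0 ≤ ∫ x in S, f x ∂μ ∧ ∫ x in S, f x ∂μ ≤ (μ S).toReal := by
    intro S hS
    set gS : Lp ℝ 2 μ := indicatorConstLp 2 hS (measure_ne_top μ _) (1 : ℝ) with hgS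
    have hSf : ∫ x in S, f x ∂μ = (inner ℝ f (gS) : ℝ) := by
      rw [real_inner_comm]
      exact (L2.inner_indicatorConstLp_one hS (measure_ne_top μ _) f).symm
    have hterm : ∀ n, (inner ℝ (fseq (φ n)) (gS) : ℝ) = ∫ x in S, (fseq (φ n)) x ∂μ := by
      intro n
      rw [real_inner_comm]
      exact L2.inner_indicatorConstLp_one hS (measure_ne_top μ _) (fseq (φ n))
    constructor
    · rw [hSf]
      refine ge_of_tendsto (hflim gS) (Filter.Eventually.of_forall fun n => ?_)
      rw [hterm n]
      exact integral_nonneg_of_ae (ae_restrict_of_ae (hfseq_nn (φ n)))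
    · rw [hSf]
      refine le_of_tendsto (hflim gS) (Filter.Eventually.of_forall fun n => ?_)
      rw [hterm n]
      have h1 : ∫ x in S, (fseq (φ n)) x ∂μ ≤ ∫ x in S, (1 : ℝ) ∂μ :=
        integral_mono_ae ((hfseq_int (φ n)).restrict) (integrable_const 1)
          (ae_restrict_of_ae (hfseq_le1 (φ n)))
      refine h1.trans ?_
      rw [setIntegral_const]
      simp [Measure.real]
  have hfnn : 0 ≤ᵐ[μ] ⇑f := by
    refine ae_nonneg_of_forall_setIntegral_nonneg hfint fun S hS _ => (hfS S hS).1
  have hfle1 : ∀ᵐ x ∂μ, f x ≤ 1 := by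
    have h1 : (0 : Ω → ℝ) ≤ᵐ[μ] fun x => 1 - f x := by
      refine ae_nonneg_of_forall_setIntegral_nonneg ((integrable_const 1).sub hfint)
        fun S hS _ => ?_
      rw [integral_sub (integrable_const 1).restrict hfint.restrict]
      rw [setIntegral_const]
      have := (hfS S hS).2
      simp only [smul_eq_mul, mul_one, Measure.real]
      linarith
    filter_upwards [h1] with x hx
    simp only [Pi.zero_apply] at hx
    linarith
  -- measurable representative with values in [0,1]
  set f₀ : Ω → ℝ := (Lp.aestronglyMeasurable f).mk f with hf₀
  have hf₀m : Measurable f₀ := (Lp.aestronglyMeasurable f).stronglyMeasurable_mk.measurable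
  have hf₀eq : ⇑f =ᵐ[μ] f₀ := (Lp.aestronglyMeasurable f).ae_eq_mk
  set ftil : Ω → ℝ := fun x => max 0 (min (f₀ x) 1) with hftil
  have hftilm : Measurable ftil := measurable_const.max (hf₀m.min measurable_const)
  have hftil0 : ∀ x, 0 ≤ ftil x := fun x => le_max_left _ _
  have hftil1 : ∀ x, ftil x ≤ 1 := fun x => max_le zero_le_one (min_le_right _ _)
  have hftil_abs : ∀ x, |ftil x| ≤ 1 :=
    fun x => abs_le.mpr ⟨by linarith [hftil0 x], hftil1 x⟩
  have hftileq : ⇑f =ᵐ[μ] ftil := by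
    filter_upwards [hfnn, hfle1, hf₀eq] with x h0 h1 heq
    simp only [Pi.zero_apply] at h0
    have hrfl : ftil x = max 0 (min (f₀ x) 1) := rfl
    rw [hrfl, ← heq, min_eq_left h1, max_eq_right h0]
  have hftil_int : Integrable ftil μ :=
    integrable_of_bdd hftilm.aestronglyMeasurable 1 hftil_abs
  -- the integral of ftil equals a
  have hinta : ∫ x, ftil x ∂μ = a := by
    set g1 : Lp ℝ 2 μ := indicatorConstLp 2 MeasurableSet.univ (measure_ne_top μ _) (1 : ℝ)
      with hg1
    have hterm : ∀ n, (inner ℝ (fseq (φ n)) (g1) : ℝ) = m (φ n) := by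
      intro n
      rw [hinner_ind (φ n) g1]
      have h1 : ∫ x in A (φ n), g1 x ∂μ = ∫ x in A (φ n), (1 : ℝ) ∂μ := by
        refine setIntegral_congr_ae (hind (φ n)).1 ?_
        filter_upwards [indicatorConstLp_coeFn (p := 2) (hs := MeasurableSet.univ)
          (hμs := measure_ne_top μ _) (c := (1 : ℝ))] with x hx _
        rw [hx, Set.indicator_univ]
      rw [h1, setIntegral_const]
      simp [hm, Measure.real]
    have h2 : Filter.Tendsto (fun n => m (φ n)) atTop (nhds a) :=
      htend.comp hφmono.tendsto_atTop
    have h3 : (inner ℝ f (g1) : ℝ) = a := by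
      refine tendsto_nhds_unique (hflim g1) ?_
      simpa only [hterm] using h2
    rw [real_inner_comm] at h3
    rw [L2.inner_indicatorConstLp_one MeasurableSet.univ (measure_ne_top μ _) f,
      setIntegral_univ] at h3
    exact (integral_congr_ae hftileq).symm.trans h3
  -- the kernel operator applied to ftil
  set Tf : Ω → ℝ := fun x => ∫ y, W x y * ftil y ∂μ with hTfdef
  have hWsec : ∀ x, Measurable (fun y => W x y) := fun x => hWm.of_uncurry_left
  have hTfm : Measurable Tf := by
    have h1 : StronglyMeasurable (fun p : Ω × Ω => W p.1 p.2 * ftil p.2) :=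
      (hWm.mul (hftilm.comp measurable_snd)).stronglyMeasurable
    exact (h1.integral_prod_right' (ν := μ)).measurable
  have hsec_int : ∀ x, Integrable (fun y => W x y * ftil y) μ := by
    intro x
    refine integrable_of_bdd ((hWsec x).mul hftilm).aestronglyMeasurable 1 fun y => ?_
    rw [abs_mul]
    calc |W x y| * |ftil y| ≤ 1 * 1 :=
          mul_le_mul (hWabs x y) (hftil_abs y) (abs_nonneg _) zero_le_one
      _ = 1 := one_mul 1
  have hTf_abs : ∀ x, |Tf x| ≤ 1 := by
    intro x
    calc |Tf x| ≤ ∫ y, |W x y * ftil y| ∂μ := abs_int_le μ _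
      _ ≤ ∫ y, (1 : ℝ) ∂μ := by
          refine integral_mono_ae (hsec_int x).abs (integrable_const 1)
            (Filter.Eventually.of_forall fun y => ?_)
          show |W x y * ftil y| ≤ (1 : ℝ)
          rw [abs_mul]
          calc |W x y| * |ftil y| ≤ 1 * 1 :=
                mul_le_mul (hWabs x y) (hftil_abs y) (abs_nonneg _) zero_le_one
            _ = 1 := one_mul 1
      _ = 1 := by simp
  have hTf_int : Integrable Tf μ := integrable_of_bdd hTfm.aestronglyMeasurable 1 hTf_abs
  -- pointwise convergence of the smoothed sequence
  have hWsec_mem : ∀ x, MemLp (fun y => W x y) 2 μ :=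
    fun x => memℒp_two_of_bdd (hWsec x).aestronglyMeasurable 1 (hWabs x)
  have hTpt : ∀ x, Filter.Tendsto (fun n => ∫ y in A (φ n), W x y ∂μ) atTop (nhds (Tf x)) := by
    intro x
    set gx : Lp ℝ 2 μ := (hWsec_mem x).toLp (fun y => W x y) with hgx
    have h1 : ∀ n, (inner ℝ (fseq (φ n)) (gx) : ℝ) = ∫ y in A (φ n), W x y ∂μ := by
      intro n
      rw [hinner_ind (φ n) gx]
      exact setIntegral_congr_ae (hind (φ n)).1
        ((MemLp.coeFn_toLp (hWsec_mem x)).mono fun y hy _ => hy)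
    have h2 : (inner ℝ f (gx) : ℝ) = Tf x := by
      rw [hinner_def f gx]
      refine integral_congr_ae ?_
      filter_upwards [MemLp.coeFn_toLp (hWsec_mem x), hftileq] with y hy1 hy2
      rw [hy1, ← hy2]
      ring
    have h3 := hflim gx
    simp only [h1, h2] at h3
    exact h3
  -- the functions Tn
  set Tn : ℕ → Ω → ℝ := fun n x => ∫ y in A n, W x y ∂μ with hTndef
  have hTnm : ∀ n, Measurable (Tn n) := by
    intro n
    have h1 : StronglyMeasurable
        (fun p : Ω × Ω => W p.1 p.2 * (A n).indicator (fun _ => (1 : ℝ)) p.2) :=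
      (hWm.mul ((measurable_const.indicator (hind n).1).comp measurable_snd)).stronglyMeasurable
    have h2 := (h1.integral_prod_right' (ν := μ)).measurable
    have h3 : (fun x => ∫ y, W x y * (A n).indicator (fun _ => (1 : ℝ)) y ∂μ) = Tn n := by
      funext x
      have h4 : ∀ y, W x y * (A n).indicator (fun _ => (1 : ℝ)) y =
          (A n).indicator (fun y => W x y) y := by
        intro y
        by_cases hy : y ∈ A n <;> simp [Set.indicator_apply, hy]
      simp_rw [h4]
      rw [integral_indicator (hind n).1]
    rw [← h3]
    exact h2
  have hTn_abs : ∀ n x, |Tn n x| ≤ 1 := by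
    intro n x
    calc |Tn n x| ≤ ∫ y in A n, |W x y| ∂μ := abs_int_le (μ.restrict (A n)) _
      _ ≤ ∫ y in A n, (1 : ℝ) ∂μ := by
          refine integral_mono_ae ((integrable_of_bdd (hWsec x).aestronglyMeasurable 1
            (hWabs x)).restrict).abs (integrable_const 1)
            (Filter.Eventually.of_forall fun y => ?_)
          show |W x y| ≤ (1 : ℝ)
          exact hWabs x y
      _ ≤ 1 := by
          rw [setIntegral_const]
          simp only [smul_eq_mul, mul_one, Measure.real]
          exact (ENNReal.toReal_le_toReal (measure_ne_top μ _) one_ne_top |>.mpr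
            prob_le_one).trans_eq ENNReal.toReal_one
  have hTn_int : ∀ n, Integrable (Tn n) μ :=
    fun n => integrable_of_bdd (hTnm n).aestronglyMeasurable 1 (hTn_abs n)
  -- L¹ convergence of Tn (φ n) to Tf
  have hL1 : Filter.Tendsto (fun n => ∫ x, |Tn (φ n) x - Tf x| ∂μ) atTop (nhds 0) := by
    have h0 : (0 : ℝ) = ∫ _ : Ω, (0 : ℝ) ∂μ := by simp
    rw [h0]
    refine tendsto_integral_of_dominated_convergence (fun _ => 2)
      (fun n => ((hTnm (φ n)).sub hTfm).abs.aestronglyMeasurable) (integrable_const 2)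
      (fun n => Filter.Eventually.of_forall fun x => ?_)
      (Filter.Eventually.of_forall fun x => ?_)
    · rw [Real.norm_eq_abs, abs_abs]
      calc |Tn (φ n) x - Tf x| ≤ |Tn (φ n) x| + |Tf x| := abs_sub _ _
        _ ≤ 1 + 1 := add_le_add (hTn_abs _ x) (hTf_abs x)
        _ = 2 := by norm_num
    · have h1 := ((hTpt x).sub (tendsto_const_nhds (x := Tf x))).abs
      simpa using h1
  -- the quadratic form
  set Q : ℝ := ∫ x, ftil x * Tf x ∂μ with hQdef
  set TfLp : Lp ℝ 2 μ := (memℒp_two_of_bdd hTfm.aestronglyMeasurable 1 hTf_abs).toLp Tf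
    with hTfLp
  have hQlim : Filter.Tendsto (fun n => ∫ x in A (φ n), Tf x ∂μ) atTop (nhds Q) := by
    have h1 := hflim TfLp
    have h2 : ∀ n, (inner ℝ (fseq (φ n)) (TfLp) : ℝ) = ∫ x in A (φ n), Tf x ∂μ := by
      intro n
      rw [hinner_ind (φ n) TfLp]
      exact setIntegral_congr_ae (hind (φ n)).1
        ((MemLp.coeFn_toLp _).mono fun y hy _ => hy)
    have h3 : (inner ℝ f (TfLp) : ℝ) = Q := by
      rw [hinner_def f TfLp]
      refine integral_congr_ae ?_
      filter_upwards [MemLp.coeFn_toLp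
        (memℒp_two_of_bdd hTfm.aestronglyMeasurable 1 hTf_abs), hftileq] with y hy1 hy2
      rw [hy1, ← hy2]
    simp only [h2, h3] at h1
    exact h1
  -- each Qn vanishes by independence
  have hQn0 : ∀ n, ∫ x in A n, Tn n x ∂μ = 0 := by
    intro n
    have hS := (hind n).1
    have hint : IntegrableOn (fun p : Ω × Ω => W p.1 p.2) (A n ×ˢ A n) (μ.prod μ) :=
      (integrable_of_bdd hWm.aestronglyMeasurable 1 fun p => hWabs p.1 p.2).restrict
    have h1 : ∫ p in A n ×ˢ A n, W p.1 p.2 ∂(μ.prod μ) =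
        ∫ x in A n, ∫ y in A n, W x y ∂μ ∂μ := setIntegral_prod _ hint
    have h2 : ∫ p in A n ×ˢ A n, W p.1 p.2 ∂(μ.prod μ) = 0 := by
      rw [← integral_indicator (hS.prod hS)]
      have h3 : (A n ×ˢ A n).indicator (fun p : Ω × Ω => W p.1 p.2) =ᵐ[μ.prod μ] 0 := by
        filter_upwards [(hind n).2] with p hp
        by_cases hmem : p ∈ A n ×ˢ A n
        · rw [Set.indicator_of_mem hmem]
          exact hp hmem.1 hmem.2
        · rw [Set.indicator_of_notMem hmem]
          rfl
      rw [integral_congr_ae h3]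
      simp
    rw [← h1.symm.trans h2]
  -- Qn converges to Q, hence Q = 0
  have hQn_tend : Filter.Tendsto (fun n => ∫ x in A (φ n), Tn (φ n) x ∂μ) atTop (nhds Q) := by
    have hdiff : Filter.Tendsto
        (fun n => ∫ x in A (φ n), Tn (φ n) x ∂μ - ∫ x in A (φ n), Tf x ∂μ) atTop (nhds 0) := by
      refine squeeze_zero_norm (fun n => ?_) hL1
      rw [Real.norm_eq_abs, ← integral_sub (hTn_int (φ n)).restrict hTf_int.restrict]
      calc |∫ x in A (φ n), (Tn (φ n) x - Tf x) ∂μ|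
          ≤ ∫ x in A (φ n), |Tn (φ n) x - Tf x| ∂μ := abs_int_le (μ.restrict _) _
        _ ≤ ∫ x, |Tn (φ n) x - Tf x| ∂μ :=
            setIntegral_le_integral ((hTn_int (φ n)).sub hTf_int).abs
              (Filter.Eventually.of_forall fun x => abs_nonneg _)
    have h5 := hdiff.add hQlim
    rw [zero_add] at h5
    refine h5.congr fun n => ?_
    ring
  have hQ0 : Q = 0 := by
    refine tendsto_nhds_unique hQn_tend ?_
    have : ∀ n, ∫ x in A (φ n), Tn (φ n) x ∂μ = 0 := fun n => hQn0 (φ n)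
    simp only [this]
    exact tendsto_const_nhds
  -- the independent set I = {ftil > 0}
  set I : Set Ω := {x | 0 < ftil x} with hIdef
  have hImeas : MeasurableSet I := measurableSet_lt measurable_const hftilm
  have hGnn : ∀ p : Ω × Ω, 0 ≤ ftil p.1 * W p.1 p.2 * ftil p.2 := fun p =>
    mul_nonneg (mul_nonneg (hftil0 _) (hW0 _ _)) (hftil0 _)
  have hGint : Integrable (fun p : Ω × Ω => ftil p.1 * W p.1 p.2 * ftil p.2) (μ.prod μ) := by
    refine integrable_of_bdd
      (((hftilm.comp measurable_fst).mul hWm).mul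
        (hftilm.comp measurable_snd)).aestronglyMeasurable 1 fun p => ?_
    rw [abs_mul, abs_mul]
    have h1 : |ftil p.1| * |W p.1 p.2| ≤ 1 := by
      calc |ftil p.1| * |W p.1 p.2| ≤ 1 * 1 :=
            mul_le_mul (hftil_abs _) (hWabs _ _) (abs_nonneg _) zero_le_one
        _ = 1 := one_mul 1
    calc |ftil p.1| * |W p.1 p.2| * |ftil p.2| ≤ 1 * 1 :=
          mul_le_mul h1 (hftil_abs _) (abs_nonneg _) zero_le_one
      _ = 1 := one_mul 1
  have hGzero : ∫ p, ftil p.1 * W p.1 p.2 * ftil p.2 ∂(μ.prod μ) = 0 := by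
    have h1 : ∫ x, ∫ y, ftil x * W x y * ftil y ∂μ ∂μ =
        ∫ p, ftil p.1 * W p.1 p.2 * ftil p.2 ∂(μ.prod μ) := integral_integral hGint
    have h2 : ∀ x, ∫ y, ftil x * W x y * ftil y ∂μ = ftil x * Tf x := by
      intro x
      simp_rw [mul_assoc]
      rw [integral_const_mul]
    rw [← h1]
    simp only [h2]
    rw [← hQdef, hQ0]
  have hae : ∀ᵐ p ∂(μ.prod μ), ftil p.1 * W p.1 p.2 * ftil p.2 = 0 := by
    have h1 := (integral_eq_zero_iff_of_nonneg hGnn hGint).mp hGzero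
    filter_upwards [h1] with p hp
    exact hp
  have hIind : IsIndepSet μ W I := by
    refine ⟨hImeas, ?_⟩
    filter_upwards [hae] with p hp h1 h2
    have hp1 : (0 : ℝ) < ftil p.1 := h1
    have hp2 : (0 : ℝ) < ftil p.2 := h2
    rcases mul_eq_zero.mp hp with h | h
    · rcases mul_eq_zero.mp h with h' | h'
      · exact absurd h' hp1.ne'
      · exact h'
    · exact absurd h hp2.ne'
  -- the measure of I equals α
  have hIle : μ I ≤ α := hmle I hIind
  have hIge : α ≤ μ I := by
    have h2 : ∫ x, ftil x ∂μ ≤ ∫ x, I.indicator (fun _ => (1 : ℝ)) x ∂μ := by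
      refine integral_mono_ae hftil_int ((integrable_const (1 : ℝ)).indicator hImeas)
        (Filter.Eventually.of_forall fun x => ?_)
      by_cases hx : x ∈ I
      · rw [Set.indicator_of_mem hx]
        exact hftil1 x
      · rw [Set.indicator_of_notMem hx]
        have hx' : ¬ (0 : ℝ) < ftil x := hx
        linarith [hftil0 x, le_of_not_gt hx']
    rw [hinta, integral_indicator_const (1 : ℝ) hImeas] at h2
    simp only [smul_eq_mul, mul_one, Measure.real] at h2
    rw [← ENNReal.ofReal_toReal hαne, ← ENNReal.ofReal_toReal (measure_ne_top μ I)]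
    exact ENNReal.ofReal_le_ofReal h2
  exact ⟨I, hIind, le_antisymm hIle hIge⟩
end

section
/- If (Wₙ) is a sequence of graphons converging to W in cut-distance, then α(W) ≥ limsupₙ α(Wₙ). (Upper semicontinuity of the independence number.) -/
open MeasureTheory ENNReal Filter
open scoped Classical

noncomputable section AuxUSC

open MeasureTheory ENNReal Filter Set Topology
open scoped Classical symmDiff

variable {Ω : Type*} [MeasurableSpace Ω]

/-- Finite unions of measurable rectangles. -/
def RectUnion (F : Set (Ω × Ω)) : Prop :=
  ∃ s : Finset (Set Ω × Set Ω), (∀ p ∈ s, MeasurableSet p.1 ∧ MeasurableSet p.2) ∧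
    F = ⋃ p ∈ s, p.1 ×ˢ p.2

lemma rectUnion_empty : RectUnion (∅ : Set (Ω × Ω)) :=
  ⟨∅, by simp, by simp⟩

lemma rectUnion_rect {S T : Set Ω} (hS : MeasurableSet S) (hT : MeasurableSet T) :
    RectUnion (S ×ˢ T) :=
  ⟨{(S, T)}, by simp [hS, hT], by simp⟩

lemma RectUnion.measurableSet {F : Set (Ω × Ω)} (h : RectUnion F) : MeasurableSet F := by
  obtain ⟨s, hs, rfl⟩ := h
  exact MeasurableSet.biUnion s.countable_toSet fun p hp => ((hs p hp).1.prod (hs p hp).2)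

lemma RectUnion.union {F G : Set (Ω × Ω)} (hF : RectUnion F) (hG : RectUnion G) :
    RectUnion (F ∪ G) := by
  obtain ⟨s, hs, rfl⟩ := hF
  obtain ⟨t, ht, rfl⟩ := hG
  refine ⟨s ∪ t, ?_, (Finset.set_biUnion_union ..).symm⟩
  intro p hp
  rcases Finset.mem_union.1 hp with h | h
  exacts [hs p h, ht p h]

lemma RectUnion.inter {F G : Set (Ω × Ω)} (hF : RectUnion F) (hG : RectUnion G) :
    RectUnion (F ∩ G) := by
  obtain ⟨s, hs, rfl⟩ := hF
  obtain ⟨t, ht, rfl⟩ := hG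
  refine ⟨(s ×ˢ t).image fun pq => (pq.1.1 ∩ pq.2.1, pq.1.2 ∩ pq.2.2), ?_, ?_⟩
  · intro p hp
    simp only [Finset.mem_image, Finset.mem_product] at hp
    obtain ⟨⟨a, b⟩, ⟨ha, hb⟩, rfl⟩ := hp
    exact ⟨((hs a ha).1.inter (ht b hb).1), ((hs a ha).2.inter (ht b hb).2)⟩
  · ext x
    simp only [Set.mem_inter_iff, Set.mem_iUnion, Finset.mem_image, exists_prop]
    constructor
    · rintro ⟨⟨a, ha, hx1⟩, ⟨b, hb, hx2⟩⟩
      rw [Set.mem_prod] at hx1 hx2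
      refine ⟨(a.1 ∩ b.1, a.2 ∩ b.2), ⟨⟨(a, b), Finset.mem_product.2 ⟨ha, hb⟩, rfl⟩, ?_⟩⟩
      exact Set.mem_prod.2 ⟨⟨hx1.1, hx2.1⟩, ⟨hx1.2, hx2.2⟩⟩
    · rintro ⟨u, ⟨⟨ab, hab, rfl⟩, hx⟩⟩
      rw [Set.mem_prod] at hx
      obtain ⟨hab1, hab2⟩ := Finset.mem_product.1 hab
      exact ⟨⟨ab.1, hab1, Set.mem_prod.2 ⟨hx.1.1, hx.2.1⟩⟩,
        ⟨ab.2, hab2, Set.mem_prod.2 ⟨hx.1.2, hx.2.2⟩⟩⟩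

lemma RectUnion.compl {F : Set (Ω × Ω)} (hF : RectUnion F) : RectUnion Fᶜ := by
  obtain ⟨s, hs, rfl⟩ := hF
  induction s using Finset.induction with
  | empty => simpa using rectUnion_rect MeasurableSet.univ MeasurableSet.univ
  | @insert a t hat ih =>
    have ht : ∀ p ∈ t, MeasurableSet p.1 ∧ MeasurableSet p.2 :=
      fun p hp => hs p (Finset.mem_insert_of_mem hp)
    have ha := hs a (Finset.mem_insert_self a t)
    rw [Finset.set_biUnion_insert, Set.compl_union]
    have hcompl : RectUnion ((a.1 ×ˢ a.2)ᶜ : Set (Ω × Ω)) := by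
      have : ((a.1 ×ˢ a.2)ᶜ : Set (Ω × Ω)) = (a.1ᶜ ×ˢ (Set.univ : Set Ω)) ∪
          ((Set.univ : Set Ω) ×ˢ a.2ᶜ) := by
        ext x; by_cases h1 : x.1 ∈ a.1 <;> by_cases h2 : x.2 ∈ a.2 <;>
          simp [Set.mem_prod, h1, h2]
      rw [this]
      exact (rectUnion_rect ha.1.compl MeasurableSet.univ).union
        (rectUnion_rect MeasurableSet.univ ha.2.compl)
    exact hcompl.inter (ih ht)



lemma rectUnion_biUnion {ι : Type*} (s : Finset ι) (f : ι → Set (Ω × Ω))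
    (h : ∀ i ∈ s, RectUnion (f i)) : RectUnion (⋃ i ∈ s, f i) := by
  induction s using Finset.induction with
  | empty => simpa using rectUnion_empty
  | @insert a t hat ih =>
    rw [Finset.set_biUnion_insert]
    exact (h a (Finset.mem_insert_self a t)).union
      (ih fun i hi => h i (Finset.mem_insert_of_mem hi))

lemma symmDiff_biUnion_subset {ι X : Type*} (s : Finset ι) (f F : ι → Set X) :
    ((⋃ i ∈ s, f i) ∆ (⋃ i ∈ s, F i)) ⊆ ⋃ i ∈ s, (f i ∆ F i) := by
  intro x hx
  rw [Set.mem_symmDiff] at hx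
  rcases hx with ⟨h1, h2⟩ | ⟨h1, h2⟩ <;>
  · simp only [Set.mem_iUnion, exists_prop] at h1 h2 ⊢
    obtain ⟨i, hi, hxi⟩ := h1
    refine ⟨i, hi, ?_⟩
    rw [Set.mem_symmDiff]
    first
    | exact Or.inl ⟨hxi, fun hc => h2 ⟨i, hi, hc⟩⟩
    | exact Or.inr ⟨hxi, fun hc => h2 ⟨i, hi, hc⟩⟩

/-- Approximation of product-measurable sets by finite unions of rectangles. -/
lemma rect_approx (π : Measure (Ω × Ω)) [IsFiniteMeasure π] {E : Set (Ω × Ω)}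
    (hE : MeasurableSet E) {ε : ℝ≥0∞} (hε : 0 < ε) :
    ∃ F, RectUnion F ∧ π (E ∆ F) ≤ ε := by
  have hE' : MeasurableSet[MeasurableSpace.generateFrom
      (Set.image2 (· ×ˢ ·) { s : Set Ω | MeasurableSet s } { t : Set Ω | MeasurableSet t })] E := by
    rwa [generateFrom_prod]
  revert ε
  refine MeasurableSpace.generateFrom_induction _
    (fun E _ => ∀ {ε : ℝ≥0∞}, 0 < ε → ∃ F, RectUnion F ∧ π (E ∆ F) ≤ ε) ?_ ?_ ?_ ?_ E hE'
  · rintro t ⟨S, hS, T, hT, rfl⟩ _ ε hε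
    exact ⟨S ×ˢ T, rectUnion_rect hS hT, by simp⟩
  · intro ε hε
    exact ⟨∅, rectUnion_empty, by simp⟩
  · intro t _ ih ε hε
    obtain ⟨F, hF, hFa⟩ := ih hε
    exact ⟨Fᶜ, hF.compl, by rwa [compl_symmDiff_compl]⟩
  · intro f hfm ih ε hε
    rcases eq_top_or_lt_top ε with rfl | hεtop
    · exact ⟨∅, rectUnion_empty, le_top⟩
    have hfm' : ∀ n, MeasurableSet (f n) := by
      intro n; have := hfm n; rwa [generateFrom_prod] at this
    set E := ⋃ i, f i with hEdef
    have hε2 : (0 : ℝ≥0∞) < ε / 2 := ENNReal.half_pos hε.ne'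
    have hε2top : ε / 2 ≠ ⊤ := (ENNReal.div_lt_top hεtop.ne (by norm_num)).ne
    set g : ℕ → Set (Ω × Ω) := fun N => ⋃ i ∈ Finset.range N, f i with hgdef
    have hgm : ∀ N, MeasurableSet (g N) := fun N =>
      (Finset.range N).measurableSet_biUnion fun i _ => hfm' i
    have hgsub : ∀ N, g N ⊆ E := fun N =>
      Set.iUnion₂_subset fun i _ => Set.subset_iUnion f i
    have hgmono : Monotone g := fun a b hab =>
      Set.biUnion_subset_biUnion_left (fun i hi =>
        Finset.mem_range.2 (lt_of_lt_of_le (Finset.mem_range.1 hi) hab))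
    have hgE : ⋃ N, g N = E := by
      apply Set.Subset.antisymm (Set.iUnion_subset hgsub)
      exact Set.iUnion_subset fun i => Set.subset_iUnion_of_subset (i + 1)
          (Set.subset_biUnion_of_mem (Finset.mem_range.2 (Nat.lt_succ_self i)))
    obtain ⟨N, hN⟩ : ∃ N, π (E \ g N) ≤ ε / 2 := by
      rcases le_or_gt (π E) (ε / 2) with h | h
      · exact ⟨0, le_trans (measure_mono Set.diff_subset) h⟩
      · have htend : Tendsto (fun N => π (g N)) atTop (𝓝 (π E)) := by
          rw [← hgE]; exact tendsto_measure_iUnion_atTop hgmono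
        have hlt : π E - ε / 2 < π E :=
          ENNReal.sub_lt_self (measure_ne_top _ _)
            (ne_of_gt (lt_of_le_of_lt zero_le h)) hε2.ne'
        obtain ⟨N, hN⟩ := (htend.eventually (Ioi_mem_nhds hlt)).exists
        have hN : π E - ε / 2 < π (g N) := hN
        refine ⟨N, ?_⟩
        rw [measure_diff (hgsub N) (hgm N).nullMeasurableSet (measure_ne_top _ _),
          tsub_le_iff_right]
        have := (ENNReal.sub_lt_iff_lt_right hε2top h.le).1 hN
        calc π E ≤ π (g N) + ε / 2 := this.le
          _ = ε / 2 + π (g N) := add_comm _ _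
    choose F hF hFa using fun i : ℕ =>
      ih i (show (0:ℝ≥0∞) < ε / 2 * (2⁻¹ : ℝ≥0∞) ^ (i + 1) from
        ENNReal.mul_pos hε2.ne' (pow_ne_zero _ (by norm_num)))
    refine ⟨⋃ i ∈ Finset.range N, F i,
      rectUnion_biUnion _ _ fun i _ => hF i, ?_⟩
    have h1 : E ∆ (⋃ i ∈ Finset.range N, F i) ⊆
        (E ∆ g N) ∪ (g N ∆ (⋃ i ∈ Finset.range N, F i)) := symmDiff_triangle E (g N) _
    calc π (E ∆ (⋃ i ∈ Finset.range N, F i))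
        ≤ π (E ∆ g N) + π (g N ∆ (⋃ i ∈ Finset.range N, F i)) :=
          le_trans (measure_mono h1) (measure_union_le _ _)
      _ ≤ ε / 2 + ε / 2 := by
          gcongr
          · rw [symmDiff_of_ge (hgsub N)]
            exact hN
          · calc π (g N ∆ (⋃ i ∈ Finset.range N, F i))
                ≤ π (⋃ i ∈ Finset.range N, (f i ∆ F i)) :=
                  measure_mono (symmDiff_biUnion_subset _ _ _)
              _ ≤ ∑ i ∈ Finset.range N, π (f i ∆ F i) := measure_biUnion_finset_le _ _
              _ ≤ ∑ i ∈ Finset.range N, ε / 2 * (2⁻¹ : ℝ≥0∞) ^ (i + 1) :=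
                  Finset.sum_le_sum fun i _ => hFa i
              _ ≤ ∑' i : ℕ, ε / 2 * (2⁻¹ : ℝ≥0∞) ^ (i + 1) := ENNReal.sum_le_tsum _
              _ = ε / 2 * ((2⁻¹ : ℝ≥0∞) * (1 - 2⁻¹)⁻¹) := by
                  rw [ENNReal.tsum_mul_left, ENNReal.tsum_geometric_add_one]
              _ = ε / 2 := by
                  rw [ENNReal.one_sub_inv_two,
                    ENNReal.mul_inv_cancel (by norm_num) (by norm_num), mul_one]
      _ = ε := ENNReal.add_halves ε

lemma tendsto_rectUnion {π : Measure (Ω × Ω)} [IsFiniteMeasure π] {πk : ℕ → Measure (Ω × Ω)}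
    {τ : Measure (Ω × Ω)} {L : Filter ℕ}
    (hk_le : ∀ k, πk k ≤ π) (hτ_le : τ ≤ π)
    (hrect : ∀ S T : Set Ω, MeasurableSet S → MeasurableSet T →
      Tendsto (fun k => πk k (S ×ˢ T)) L (𝓝 (τ (S ×ˢ T))))
    {F : Set (Ω × Ω)} (hF : RectUnion F) :
    Tendsto (fun k => πk k F) L (𝓝 (τ F)) := by
  have hπtop : ∀ (ρ : Measure (Ω × Ω)), ρ ≤ π → ∀ s, ρ s ≠ ⊤ := fun ρ hρ s =>
    (lt_of_le_of_lt (le_trans (le_trans (measure_mono (Set.subset_univ s)) (hρ Set.univ))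
      le_rfl) (measure_lt_top π Set.univ)).ne
  have hstep : ∀ X Y : Set (Ω × Ω), MeasurableSet X → MeasurableSet Y →
      Tendsto (fun k => πk k X) L (𝓝 (τ X)) → Tendsto (fun k => πk k Y) L (𝓝 (τ Y)) →
      Tendsto (fun k => πk k (X ∩ Y)) L (𝓝 (τ (X ∩ Y))) →
      Tendsto (fun k => πk k (X ∪ Y)) L (𝓝 (τ (X ∪ Y))) := by
    intro X Y hX hY hTX hTY hTXY
    have h_eq : ∀ (ρ : Measure (Ω × Ω)), ρ ≤ π → ρ (X ∪ Y) = ρ X + ρ Y - ρ (X ∩ Y) := by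
      intro ρ hρ
      exact ENNReal.eq_sub_of_add_eq (hπtop ρ hρ _) (measure_union_add_inter X hY)
    have : (fun k => πk k (X ∪ Y)) = fun k => πk k X + πk k Y - πk k (X ∩ Y) := by
      funext k; exact h_eq _ (hk_le k)
    rw [this, h_eq τ hτ_le]
    exact ENNReal.Tendsto.sub (hTX.add hTY) hTXY (Or.inr (hπtop τ hτ_le _))
  obtain ⟨s, hs, rfl⟩ := hF
  have key : ∀ n (s : Finset (Set Ω × Set Ω)), s.card ≤ n →
      (∀ p ∈ s, MeasurableSet p.1 ∧ MeasurableSet p.2) →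
      Tendsto (fun k => πk k (⋃ p ∈ s, p.1 ×ˢ p.2)) L (𝓝 (τ (⋃ p ∈ s, p.1 ×ˢ p.2))) := by
    intro n
    induction n with
    | zero =>
      intro s hcard _
      rw [Finset.card_eq_zero.1 (le_antisymm hcard (Nat.zero_le _))]
      simp only [Finset.notMem_empty, Set.iUnion_of_empty, Set.iUnion_empty, measure_empty]
      exact tendsto_const_nhds
    | succ n ihn =>
      intro s hcard hmeas
      rcases s.eq_empty_or_nonempty with rfl | hne
      · simp only [Finset.notMem_empty, Set.iUnion_of_empty, Set.iUnion_empty, measure_empty]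
        exact tendsto_const_nhds
      obtain ⟨a, ha⟩ := hne
      have hts : s = insert a (s.erase a) := (Finset.insert_erase ha).symm
      set t := s.erase a with htdef
      have htcard : t.card ≤ n := by
        rw [htdef, Finset.card_erase_of_mem ha]
        omega
      have htmeas : ∀ p ∈ t, MeasurableSet p.1 ∧ MeasurableSet p.2 :=
        fun p hp => hmeas p (Finset.mem_of_mem_erase hp)
      have hameas := hmeas a ha
      rw [hts, Finset.set_biUnion_insert]
      set Y := ⋃ p ∈ t, p.1 ×ˢ p.2 with hYdef
      have hYmeas : MeasurableSet Y :=
        (Finset.measurableSet_biUnion t fun p hp => ((htmeas p hp).1.prod (htmeas p hp).2))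
      have hXY : (a.1 ×ˢ a.2) ∩ Y =
          ⋃ p ∈ t.image (fun p : Set Ω × Set Ω => (a.1 ∩ p.1, a.2 ∩ p.2)), p.1 ×ˢ p.2 := by
        rw [hYdef, Set.inter_iUnion₂]
        ext x
        simp only [Set.mem_iUnion, Finset.mem_image, exists_prop]
        constructor
        · rintro ⟨p, hp, hx⟩
          exact ⟨(a.1 ∩ p.1, a.2 ∩ p.2), ⟨p, hp, rfl⟩, by
            rw [← Set.prod_inter_prod]; exact hx⟩
        · rintro ⟨q, ⟨p, hp, rfl⟩, hx⟩
          exact ⟨p, hp, by rwa [← Set.prod_inter_prod] at hx⟩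
      refine hstep _ _ (hameas.1.prod hameas.2) hYmeas
        (hrect _ _ hameas.1 hameas.2) (ihn t htcard htmeas) ?_
      rw [hXY]
      refine ihn _ (le_trans (Finset.card_image_le) htcard) ?_
      intro p hp
      simp only [Finset.mem_image] at hp
      obtain ⟨q, hq, rfl⟩ := hp
      exact ⟨hameas.1.inter (htmeas q hq).1, hameas.2.inter (htmeas q hq).2⟩
  exact key s.card s le_rfl hs

theorem main_aux (μ : Measure Ω) [IsProbabilityMeasure μ]
    {W : Ω → Ω → ℝ} (hW : IsGraphon W) (B : ℕ → Set Ω) (hBm : ∀ k, MeasurableSet (B k))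
    (b : ℝ≥0∞) (hBb : ∀ k, b ≤ μ (B k))
    (hD : Tendsto (fun k => ∫⁻ p, ENNReal.ofReal (W p.1 p.2)
      ∂((μ.restrict (B k)).prod (μ.restrict (B k)))) atTop (𝓝 0)) :
    ∃ A, IsIndepSet μ W A ∧ b ≤ μ A := by
  classical
  set 𝒰 : Ultrafilter ℕ := Ultrafilter.of atTop with h𝒰def
  have h𝒰 : (𝒰 : Filter ℕ) ≤ atTop := Ultrafilter.of_le _
  haveI : (𝒰 : Filter ℕ).NeBot := 𝒰.neBot
  -- ultrafilter limits exist in ℝ≥0∞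
  have hlim : ∀ g : ℕ → ℝ≥0∞, ∃ x, Tendsto g 𝒰 (𝓝 x) := by
    intro g
    obtain ⟨x, -, hx⟩ := isCompact_univ.ultrafilter_le_nhds (𝒰.map g)
      (by simp [Filter.le_principal_iff])
    exact ⟨x, hx⟩
  set m : Set Ω → ℝ≥0∞ := fun s => limUnder (𝒰 : Filter ℕ) (fun k => μ (s ∩ B k)) with hmdef
  have hm : ∀ s, Tendsto (fun k => μ (s ∩ B k)) 𝒰 (𝓝 (m s)) := fun s =>
    tendsto_nhds_limUnder (hlim _)
  have hm_le : ∀ s, m s ≤ μ s := fun s =>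
    le_of_tendsto (hm s) (Eventually.of_forall fun k => measure_mono Set.inter_subset_left)
  have hm_mono : ∀ s t : Set Ω, s ⊆ t → m s ≤ m t := fun s t hst =>
    le_of_tendsto_of_tendsto' (hm s) (hm t)
      (fun k => measure_mono (Set.inter_subset_inter_left _ hst))
  have hm_empty : m ∅ = 0 := by
    refine tendsto_nhds_unique (hm ∅) ?_
    simpa using (tendsto_const_nhds : Tendsto (fun _ : ℕ => (0:ℝ≥0∞)) 𝒰 (𝓝 0))
  have hm_add : ∀ s t : Set Ω, MeasurableSet t → Disjoint s t → m (s ∪ t) = m s + m t := by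
    intro s t ht hst
    refine tendsto_nhds_unique (hm (s ∪ t)) ?_
    have : (fun k => μ (s ∩ B k) + μ (t ∩ B k)) = fun k => μ ((s ∪ t) ∩ B k) := by
      funext k
      rw [Set.union_inter_distrib_right,
        measure_union (hst.mono Set.inter_subset_left Set.inter_subset_left)
          (ht.inter (hBm k))]
    rw [← this] at *
    exact (hm s).add (hm t)
  have hm_finadd : ∀ (f : ℕ → Set Ω), (∀ i, MeasurableSet (f i)) → Pairwise (Function.onFun Disjoint f) →
      ∀ N, m (⋃ i ∈ Finset.range N, f i) = ∑ i ∈ Finset.range N, m (f i) := by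
    intro f hf hdisj N
    induction N with
    | zero => simpa using hm_empty
    | succ N ih =>
      rw [Finset.range_add_one, Finset.set_biUnion_insert, Finset.sum_insert (by simp)]
      rw [hm_add _ _ ((Finset.range N).measurableSet_biUnion fun i _ => hf i) ?_, ih]
      exact Set.disjoint_iUnion₂_right.2 fun i hi =>
        hdisj (by simp only [Finset.mem_range] at hi; omega)
  -- the weak limit measure ν
  have hadd : ∀ (f : ℕ → Set Ω), (∀ i, MeasurableSet (f i)) → Pairwise (Function.onFun Disjoint f) →
      m (⋃ i, f i) = ∑' i, m (f i) := by
    intro f hf hdisj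
    apply le_antisymm
    · -- m (⋃ f) ≤ ∑'
      refine ENNReal.le_of_forall_pos_le_add fun ε hε _ => ?_
      have htail : Tendsto (fun N => ∑' i, μ (f (i + N))) atTop (𝓝 0) :=
        ENNReal.tendsto_sum_nat_add _ (by
          rw [← measure_iUnion hdisj hf]; exact measure_ne_top μ _)
      obtain ⟨N, hN⟩ := (htail.eventually (Iio_mem_nhds (by exact_mod_cast hε : (0:ℝ≥0∞) < ε))).exists
      have hsplit : ∀ k, μ ((⋃ i, f i) ∩ B k) ≤
          μ ((⋃ i ∈ Finset.range N, f i) ∩ B k) + ∑' i, μ (f (i + N)) := by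
        intro k
        have : (⋃ i, f i) ⊆ (⋃ i ∈ Finset.range N, f i) ∪ ⋃ i, f (i + N) := by
          refine Set.iUnion_subset fun i => ?_
          rcases lt_or_ge i N with h | h
          · exact fun x hx => Or.inl (Set.mem_biUnion (Finset.mem_range.2 h) hx)
          · exact fun x hx => Or.inr (Set.mem_iUnion.2 ⟨i - N, by rwa [Nat.sub_add_cancel h]⟩)
        calc μ ((⋃ i, f i) ∩ B k)
            ≤ μ (((⋃ i ∈ Finset.range N, f i) ∩ B k) ∪ ⋃ i, f (i + N)) := by
              refine measure_mono ?_
              intro x hx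
              rcases this hx.1 with h | h
              · exact Or.inl ⟨h, hx.2⟩
              · exact Or.inr h
          _ ≤ μ ((⋃ i ∈ Finset.range N, f i) ∩ B k) + μ (⋃ i, f (i + N)) := measure_union_le _ _
          _ ≤ _ := by gcongr; exact measure_iUnion_le _
      have hlim2 : Tendsto (fun k => μ ((⋃ i ∈ Finset.range N, f i) ∩ B k) +
          ∑' i, μ (f (i + N))) 𝒰 (𝓝 (m (⋃ i ∈ Finset.range N, f i) + ∑' i, μ (f (i + N)))) :=
        (hm _).add tendsto_const_nhds
      have h1 : m (⋃ i, f i) ≤ m (⋃ i ∈ Finset.range N, f i) + ∑' i, μ (f (i + N)) :=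
        le_of_tendsto_of_tendsto' (hm _) hlim2 hsplit
      calc m (⋃ i, f i) ≤ m (⋃ i ∈ Finset.range N, f i) + ∑' i, μ (f (i + N)) := h1
        _ ≤ (∑' i, m (f i)) + ε :=
            add_le_add (by rw [hm_finadd f hf hdisj N]; exact ENNReal.sum_le_tsum _) hN.le
    · -- ∑' ≤ m (⋃ f)
      rw [ENNReal.tsum_eq_iSup_nat]
      refine iSup_le fun N => ?_
      rw [← hm_finadd f hf hdisj N]
      exact hm_mono _ _ (Set.iUnion₂_subset fun i _ => Set.subset_iUnion f i)
  set ν : Measure Ω := Measure.ofMeasurable (fun s _ => m s) hm_empty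
    (fun f hf hdisj => hadd f hf hdisj) with hνdef
  have hν : ∀ s, MeasurableSet s → ν s = m s := fun s hs =>
    Measure.ofMeasurable_apply s hs
  have hν_le : ν ≤ μ := Measure.le_iff.2 fun s hs => (hν s hs).le.trans (hm_le s)
  haveI : IsFiniteMeasure ν :=
    ⟨lt_of_le_of_lt (Measure.le_iff'.1 hν_le Set.univ) (measure_lt_top μ _)⟩
  have hν_ac : ν ≪ μ := Measure.AbsolutelyContinuous.mk fun s hs h0 =>
    le_antisymm (le_trans (Measure.le_iff'.1 hν_le s) h0.le) zero_le
  set f : Ω → ℝ≥0∞ := ν.rnDeriv μ with hfdef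
  have hfm : Measurable f := Measure.measurable_rnDeriv ν μ
  have hwd : μ.withDensity f = ν := Measure.withDensity_rnDeriv_eq ν μ hν_ac
  set A : Set Ω := {x | f x ≠ 0} with hAdef
  have hA : MeasurableSet A := (hfm (measurableSet_singleton 0)).compl
  -- ν vanishes outside A
  have hνAc : ν Aᶜ = 0 := by
    rw [← hwd, withDensity_apply _ hA.compl]
    calc ∫⁻ x in Aᶜ, f x ∂μ = ∫⁻ x in Aᶜ, (0:ℝ≥0∞) ∂μ :=
          setLIntegral_congr_fun hA.compl
            (fun x hx => by simpa [hAdef] using hx)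
      _ = 0 := lintegral_zero
  -- b ≤ μ A
  have hbν : b ≤ ν A := by
    have hbuniv : b ≤ m Set.univ :=
      le_of_tendsto_of_tendsto' tendsto_const_nhds (hm Set.univ)
        (fun k => by rw [Set.univ_inter]; exact hBb k)
    have h1 : ν Set.univ = ν A + ν Aᶜ := (measure_add_measure_compl hA).symm
    have h2 : ν Set.univ = m Set.univ := hν _ MeasurableSet.univ
    calc b ≤ m Set.univ := hbuniv
      _ = ν A + ν Aᶜ := by rw [← h2, h1]
      _ = ν A := by rw [hνAc, add_zero]
  have hbA : b ≤ μ A := hbν.trans (Measure.le_iff'.1 hν_le A)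
  -- ν-null sets intersected with A are μ-null
  have hnull : ∀ N : Set Ω, MeasurableSet N → ν N = 0 → μ (N ∩ A) = 0 := by
    intro N hN h0
    rw [← hwd, withDensity_apply _ hN] at h0
    have hae : f =ᵐ[μ.restrict N] 0 := (lintegral_eq_zero_iff hfm).1 h0
    have h1 : μ.restrict N {x | ¬ f x = 0} = 0 := ae_iff.1 hae
    have h2 : μ.restrict N A = 0 := h1
    rwa [Measure.restrict_apply hA, Set.inter_comm] at h2
  -- product measures
  set π : Measure (Ω × Ω) := μ.prod μ with hπdef
  set πk : ℕ → Measure (Ω × Ω) := fun k => (μ.restrict (B k)).prod (μ.restrict (B k)) with hπkdef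
  set τ : Measure (Ω × Ω) := ν.prod ν with hτdef
  have hπk_le : ∀ k, πk k ≤ π := fun k => by
    rw [hπkdef]
    simp only
    rw [Measure.prod_restrict]
    exact Measure.restrict_le_self
  have hτ_le : τ ≤ π := by
    refine Measure.le_iff.2 fun s hs => ?_
    rw [hτdef, hπdef, Measure.prod_apply hs, Measure.prod_apply hs]
    calc ∫⁻ x, ν (Prod.mk x ⁻¹' s) ∂ν ≤ ∫⁻ x, μ (Prod.mk x ⁻¹' s) ∂ν :=
        lintegral_mono fun x => Measure.le_iff'.1 hν_le _
      _ ≤ ∫⁻ x, μ (Prod.mk x ⁻¹' s) ∂μ := lintegral_mono' hν_le le_rfl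
  have hrect : ∀ S T : Set Ω, MeasurableSet S → MeasurableSet T →
      Tendsto (fun k => πk k (S ×ˢ T)) (𝒰 : Filter ℕ) (𝓝 (τ (S ×ˢ T))) := by
    intro S T hS hT
    have h1 : ∀ k, πk k (S ×ˢ T) = μ (S ∩ B k) * μ (T ∩ B k) := fun k => by
      rw [hπkdef]
      simp only
      rw [Measure.prod_prod, Measure.restrict_apply hS, Measure.restrict_apply hT]
    have h2 : τ (S ×ˢ T) = m S * m T := by
      rw [hτdef, Measure.prod_prod, hν S hS, hν T hT]
    rw [h2]
    simp only [h1]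
    exact ENNReal.Tendsto.mul (hm S)
      (Or.inr ((hm_le T).trans_lt (measure_lt_top μ T)).ne) (hm T)
      (Or.inr ((hm_le S).trans_lt (measure_lt_top μ S)).ne)
  have hW'm : Measurable fun p : Ω × Ω => ENNReal.ofReal (W p.1 p.2) :=
    ENNReal.measurable_ofReal.comp hW.1
  have hDk : Tendsto (fun k => ∫⁻ p, ENNReal.ofReal (W p.1 p.2) ∂(πk k)) (𝒰 : Filter ℕ) (𝓝 0) :=
    hD.mono_left h𝒰
  -- level sets of W are τ-null
  have hZ : ∀ δ : ℝ, 0 < δ → τ {p : Ω × Ω | δ ≤ W p.1 p.2} = 0 := by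
    intro δ hδ
    set E := {p : Ω × Ω | δ ≤ W p.1 p.2} with hEdef
    have hEm : MeasurableSet E := measurableSet_le measurable_const hW.1
    have hδ0 : (ENNReal.ofReal δ) ≠ 0 := (ENNReal.ofReal_pos.2 hδ).ne'
    have hEk : ∀ k, πk k E ≤ (ENNReal.ofReal δ)⁻¹ *
        ∫⁻ p, ENNReal.ofReal (W p.1 p.2) ∂(πk k) := by
      intro k
      have hch := mul_meas_ge_le_lintegral₀ (μ := πk k) hW'm.aemeasurable (ENNReal.ofReal δ)
      have hsub : E ⊆ {p : Ω × Ω | ENNReal.ofReal δ ≤ ENNReal.ofReal (W p.1 p.2)} :=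
        fun p hp => ENNReal.ofReal_le_ofReal hp
      calc πk k E ≤ πk k {p : Ω × Ω | ENNReal.ofReal δ ≤ ENNReal.ofReal (W p.1 p.2)} :=
            measure_mono hsub
        _ = (ENNReal.ofReal δ)⁻¹ * (ENNReal.ofReal δ *
            πk k {p : Ω × Ω | ENNReal.ofReal δ ≤ ENNReal.ofReal (W p.1 p.2)}) := by
            rw [← mul_assoc, ENNReal.inv_mul_cancel hδ0 ENNReal.ofReal_ne_top, one_mul]
        _ ≤ _ := mul_le_mul_right hch _
    have htendE : Tendsto (fun k => (ENNReal.ofReal δ)⁻¹ *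
        ∫⁻ p, ENNReal.ofReal (W p.1 p.2) ∂(πk k)) (𝒰 : Filter ℕ) (𝓝 0) := by
      have := ENNReal.Tendsto.const_mul (a := (ENNReal.ofReal δ)⁻¹) hDk
        (Or.inr (ENNReal.inv_ne_top.2 hδ0))
      simpa using this
    refine le_antisymm (ENNReal.le_of_forall_pos_le_add fun ε hε _ => ?_) zero_le
    have hε2 : (0:ℝ≥0∞) < (ε:ℝ≥0∞) / 2 :=
      ENNReal.half_pos (by exact_mod_cast hε.ne' : (ε:ℝ≥0∞) ≠ 0)
    obtain ⟨F, hF, hFa⟩ := rect_approx π hEm hε2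
    have hπEF : π (E ∆ F) ≤ (ε:ℝ≥0∞) / 2 := hFa
    have hτF : τ F ≤ 0 + (ε:ℝ≥0∞) / 2 := by
      refine le_of_tendsto_of_tendsto' (tendsto_rectUnion hπk_le hτ_le hrect hF)
        (htendE.add tendsto_const_nhds) fun k => ?_
      calc πk k F ≤ πk k (E ∪ (F \ E)) := measure_mono fun x hx => by
            by_cases hxe : x ∈ E
            · exact Or.inl hxe
            · exact Or.inr ⟨hx, hxe⟩
        _ ≤ πk k E + πk k (F \ E) := measure_union_le _ _
        _ ≤ ((ENNReal.ofReal δ)⁻¹ * ∫⁻ p, ENNReal.ofReal (W p.1 p.2) ∂(πk k))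
            + (ε:ℝ≥0∞) / 2 := by
            refine add_le_add (hEk k) ?_
            calc πk k (F \ E) ≤ π (F \ E) := Measure.le_iff'.1 (hπk_le k) _
              _ ≤ π (E ∆ F) := measure_mono fun x hx => Or.inr hx
              _ ≤ _ := hπEF
    calc τ E ≤ τ (F ∪ (E \ F)) := measure_mono fun x hx => by
          by_cases hxf : x ∈ F
          · exact Or.inl hxf
          · exact Or.inr ⟨hx, hxf⟩
      _ ≤ τ F + τ (E \ F) := measure_union_le _ _
      _ ≤ (0 + (ε:ℝ≥0∞) / 2) + (ε:ℝ≥0∞) / 2 := by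
          refine add_le_add hτF ?_
          calc τ (E \ F) ≤ π (E \ F) := Measure.le_iff'.1 hτ_le _
            _ ≤ π (E ∆ F) := measure_mono fun x hx => Or.inl hx
            _ ≤ _ := hπEF
      _ = 0 + (ε:ℝ≥0∞) := by rw [add_assoc, ENNReal.add_halves]
  -- level sets intersected with A × A are π-null
  have hGnull : ∀ δ : ℝ, 0 < δ → π ({p : Ω × Ω | δ ≤ W p.1 p.2} ∩ (A ×ˢ A)) = 0 := by
    intro δ hδ
    set G := {p : Ω × Ω | δ ≤ W p.1 p.2} ∩ (A ×ˢ A) with hGdef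
    have hGm : MeasurableSet G :=
      (measurableSet_le measurable_const hW.1).inter (hA.prod hA)
    have hτG : τ G = 0 :=
      le_antisymm (le_trans (measure_mono Set.inter_subset_left) (hZ δ hδ).le) zero_le
    have hGsub : G ⊆ A ×ˢ A := Set.inter_subset_right
    rw [hτdef, Measure.prod_apply hGm] at hτG
    have haeν : (fun x => ν (Prod.mk x ⁻¹' G)) =ᵐ[ν] 0 :=
      (lintegral_eq_zero_iff (measurable_measure_prodMk_left hGm)).1 hτG
    set N' := {x | ν (Prod.mk x ⁻¹' G) ≠ 0} with hN'def
    have hN'm : MeasurableSet N' :=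
      ((measurable_measure_prodMk_left hGm) (measurableSet_singleton 0)).compl
    have hνN' : ν N' = 0 := ae_iff.1 haeν
    have hμN'A : μ (N' ∩ A) = 0 := hnull N' hN'm hνN'
    have hslice : ∀ x, x ∉ N' ∩ A → μ (Prod.mk x ⁻¹' G) = 0 := by
      intro x hx
      by_cases hxA : x ∈ A
      · have hxN' : x ∉ N' := fun h => hx ⟨h, hxA⟩
        have hν0 : ν (Prod.mk x ⁻¹' G) = 0 := not_not.1 hxN'
        have hsm : MeasurableSet (Prod.mk x ⁻¹' G) := measurable_prodMk_left hGm
        have := hnull _ hsm hν0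
        have hsubA : (Prod.mk x ⁻¹' G) ⊆ A := fun y hy => (hGsub hy).2
        rwa [Set.inter_eq_self_of_subset_left hsubA] at this
      · have : Prod.mk x ⁻¹' G = ∅ := by
          ext y
          simp only [Set.mem_preimage, Set.mem_empty_iff_false, iff_false]
          exact fun hy => hxA (hGsub hy).1
        rw [this, measure_empty]
    have haeμ : (fun x => μ (Prod.mk x ⁻¹' G)) =ᵐ[μ] 0 := by
      rw [Filter.EventuallyEq, ae_iff]
      refine measure_mono_null (fun x hx => ?_) hμN'A
      simp only [Set.mem_setOf_eq] at hx
      by_contra hxn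
      exact hx (hslice x hxn)
    rw [hπdef, Measure.prod_apply hGm, lintegral_congr_ae haeμ]
    simp
  -- conclude independence
  refine ⟨A, ⟨hA, ?_⟩, hbA⟩
  have hbad : {p : Ω × Ω | ¬ (p.1 ∈ A → p.2 ∈ A → W p.1 p.2 = 0)} ⊆
      ⋃ n : ℕ, ({p : Ω × Ω | 1 / (n + 1 : ℝ) ≤ W p.1 p.2} ∩ (A ×ˢ A)) := by
    intro p hp
    simp only [Set.mem_setOf_eq, not_forall] at hp
    obtain ⟨h1, h2, h3⟩ := hp
    have hpos : 0 < W p.1 p.2 := lt_of_le_of_ne (hW.2.2 p.1 p.2).1 (Ne.symm h3)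
    obtain ⟨n, hn⟩ := exists_nat_one_div_lt hpos
    exact Set.mem_iUnion.2 ⟨n, ⟨hn.le, ⟨h1, h2⟩⟩⟩
  rw [ae_iff]
  refine measure_mono_null hbad (measure_iUnion_null fun n => hGnull _ ?_)
  positivity

end AuxUSC

open MeasureTheory ENNReal Filter

theorem stmt_4 {Ω : Type*} [MeasurableSpace Ω] (μ : Measure Ω) [IsProbabilityMeasure μ]
    [NullSingletonClass μ] {W : Ω → Ω → ℝ} (hW : IsGraphon W) (Wn : ℕ → Ω → Ω → ℝ)
    (hWn : ∀ n, IsGraphon (Wn n))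
    (hconv : Tendsto (fun n => cutDist μ (Wn n) W) atTop (nhds 0)) :
    limsup (fun n => indepNum μ (Wn n)) atTop ≤ indepNum μ W := by
  classical
  by_contra hcon
  push_neg at hcon
  obtain ⟨b, hb1, hb2⟩ := exists_between hcon
  have hfreq : ∃ᶠ n in atTop, b < indepNum μ (Wn n) :=
    frequently_lt_of_lt_limsup ⟨0, fun a _ => zero_le⟩ hb2
  set π : Measure (Ω × Ω) := μ.prod μ with hπdef
  -- one approximating set for each accuracy 1/(m+1)
  have hstep : ∀ m : ℕ, ∃ C : Set Ω, MeasurableSet C ∧ b ≤ μ C ∧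
      ∫⁻ p, ENNReal.ofReal (W p.1 p.2) ∂((μ.restrict C).prod (μ.restrict C)) ≤
        ENNReal.ofReal (1 / (m + 1 : ℝ)) := by
    intro m
    have hεpos : (0:ℝ) < 1 / (m + 1 : ℝ) := by positivity
    have hev : ∀ᶠ n in atTop, cutDist μ (Wn n) W < 1 / (m + 1 : ℝ) :=
      hconv.eventually (Iio_mem_nhds hεpos)
    obtain ⟨n, hn1, hn2⟩ := (hfreq.and_eventually hev).exists
    rw [indepNum, lt_iSup_iff] at hn1
    obtain ⟨A, hA⟩ := hn1
    rw [lt_iSup_iff] at hA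
    obtain ⟨hAind, hAb⟩ := hA
    haveI hne : Nonempty {e : Ω ≃ᵐ Ω // MeasurePreserving e μ μ} :=
      ⟨⟨MeasurableEquiv.refl Ω, MeasurePreserving.id μ⟩⟩
    rw [cutDist] at hn2
    obtain ⟨e, he⟩ := exists_lt_of_ciInf_lt hn2
    -- integrability facts
    set u : Ω × Ω → ℝ := fun p => Wn n p.1 p.2 - W (e.1 p.1) (e.1 p.2) with hudef
    have hg1m : Measurable fun p : Ω × Ω => Wn n p.1 p.2 := (hWn n).1
    have hg2m : Measurable fun p : Ω × Ω => W (e.1 p.1) (e.1 p.2) :=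
      hW.1.comp (e.1.measurable.prodMap e.1.measurable)
    have hum : Measurable u := hg1m.sub hg2m
    have hbd1 : ∀ (V : Ω → Ω → ℝ), IsGraphon V → ∀ p : Ω × Ω, |V p.1 p.2| ≤ 1 := by
      intro V hV p
      have := hV.2.2 p.1 p.2
      rw [abs_le]
      exact ⟨le_trans (by norm_num) this.1, this.2⟩
    have hg1int : Integrable (fun p : Ω × Ω => Wn n p.1 p.2) π :=
      ⟨hg1m.aestronglyMeasurable, HasFiniteIntegral.of_bounded (C := 1)
        (ae_of_all _ fun p => by simpa [Real.norm_eq_abs] using hbd1 _ (hWn n) p)⟩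
    have hg2int : Integrable (fun p : Ω × Ω => W (e.1 p.1) (e.1 p.2)) π :=
      ⟨hg2m.aestronglyMeasurable, HasFiniteIntegral.of_bounded (C := 1)
        (ae_of_all _ fun p => by
          simpa [Real.norm_eq_abs] using hbd1 _ hW (e.1 p.1, e.1 p.2))⟩
    have huint : Integrable u π := hg1int.sub hg2int
    -- the cut norm bounds the A × A integral
    have hcut : |∫ p in A ×ˢ A, u p ∂π| ≤
        cutNorm μ (fun x y => Wn n x y - W (e.1 x) (e.1 y)) := by
      set M : ℝ := ∫ p, |u p| ∂π with hMdef
      have hbd : ∀ (S T : {S : Set Ω // MeasurableSet S}),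
          |∫ p in S.1 ×ˢ T.1, u p ∂π| ≤ M := by
        intro S T
        calc |∫ p in S.1 ×ˢ T.1, u p ∂π| ≤ ∫ p in S.1 ×ˢ T.1, |u p| ∂π := by
              simpa [Real.norm_eq_abs] using
                norm_integral_le_integral_norm (μ := π.restrict (S.1 ×ˢ T.1)) u
          _ ≤ M := integral_mono_measure Measure.restrict_le_self
              (ae_of_all _ fun p => abs_nonneg _) huint.abs
      have h1 : |∫ p in A ×ˢ A, u p ∂π| ≤
          ⨆ T : {T : Set Ω // MeasurableSet T}, |∫ p in A ×ˢ T.1, u p ∂π| := by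
        refine le_ciSup (f := fun T : {T : Set Ω // MeasurableSet T} =>
          |∫ p in A ×ˢ T.1, u p ∂π|) ?_ ⟨A, hAind.1⟩
        refine ⟨M, ?_⟩
        rintro x ⟨T, rfl⟩
        exact hbd ⟨A, hAind.1⟩ T
      refine h1.trans ?_
      refine le_ciSup (f := fun S : {S : Set Ω // MeasurableSet S} =>
        ⨆ T : {T : Set Ω // MeasurableSet T}, |∫ p in S.1 ×ˢ T.1, u p ∂π|) ?_ ⟨A, hAind.1⟩
      refine ⟨M, ?_⟩
      rintro x ⟨S, rfl⟩
      exact ciSup_le fun T => hbd S T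
    -- the Wn-part of the integral vanishes
    have hzero : ∫ p in A ×ˢ A, Wn n p.1 p.2 ∂π = 0 := by
      have hzae : (fun p : Ω × Ω => Wn n p.1 p.2) =ᵐ[π.restrict (A ×ˢ A)]
          (fun _ => (0:ℝ)) := by
        have hmem : ∀ᵐ p ∂π.restrict (A ×ˢ A), p ∈ A ×ˢ A :=
          ae_restrict_mem (hAind.1.prod hAind.1)
        have himp := ae_restrict_of_ae (s := A ×ˢ A) hAind.2
        filter_upwards [hmem, himp] with p hp h2
        exact h2 hp.1 hp.2
      rw [integral_congr_ae hzae, integral_zero]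
    have hsub : ∫ p in A ×ˢ A, u p ∂π =
        - ∫ p in A ×ˢ A, W (e.1 p.1) (e.1 p.2) ∂π := by
      rw [hudef]
      rw [integral_sub hg1int.restrict hg2int.restrict, hzero, zero_sub]
    have hWee : |∫ p in A ×ˢ A, W (e.1 p.1) (e.1 p.2) ∂π| < 1 / (m + 1 : ℝ) := by
      have := lt_of_le_of_lt hcut he
      rw [hsub, abs_neg] at this
      exact this
    -- transfer to the image set
    set C : Set Ω := e.1 '' A with hCdef
    have hCm : MeasurableSet C := by
      rw [hCdef, MeasurableEquiv.image_eq_preimage_symm]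
      exact e.1.symm.measurable hAind.1
    have hpre : A ×ˢ A = (Prod.map e.1 e.1) ⁻¹' (C ×ˢ C) := by
      rw [Set.preimage_prod_map_prod, hCdef, Set.preimage_image_eq A e.1.injective]
    have hmp : MeasurePreserving (Prod.map e.1 e.1) π π := e.2.prod e.2
    have hemb : MeasurableEmbedding (Prod.map e.1 e.1) :=
      (e.1.prodCongr e.1).measurableEmbedding
    have himg : ∫ p in A ×ˢ A, W (e.1 p.1) (e.1 p.2) ∂π =
        ∫ p in C ×ˢ C, W p.1 p.2 ∂π := by
      rw [hpre]
      exact hmp.setIntegral_preimage_emb hemb (fun q => W q.1 q.2) _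
    have hCb : b ≤ μ C := by
      have h1 : μ (e.1 ⁻¹' C) = μ C := e.2.measure_preimage hCm.nullMeasurableSet
      have h2 : e.1 ⁻¹' C = A := by rw [hCdef, Set.preimage_image_eq A e.1.injective]
      rw [← h1, h2]
      exact hAb.le
    -- lintegral bound on C × C
    refine ⟨C, hCm, hCb, ?_⟩
    have hres : (μ.restrict C).prod (μ.restrict C) = π.restrict (C ×ˢ C) := by
      rw [hπdef, Measure.prod_restrict]
    have hWnn : 0 ≤ᵐ[π.restrict (C ×ˢ C)] fun p : Ω × Ω => W p.1 p.2 :=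
      ae_of_all _ fun p => (hW.2.2 p.1 p.2).1
    have hWCint : Integrable (fun p : Ω × Ω => W p.1 p.2) (π.restrict (C ×ˢ C)) := by
      refine Integrable.restrict ?_
      exact ⟨hW.1.aestronglyMeasurable, HasFiniteIntegral.of_bounded (C := 1)
        (ae_of_all _ fun p => by simpa [Real.norm_eq_abs] using hbd1 _ hW p)⟩
    rw [hres, ← ofReal_integral_eq_lintegral_ofReal hWCint hWnn]
    refine ENNReal.ofReal_le_ofReal ?_
    have hint_nonneg : 0 ≤ ∫ p in C ×ˢ C, W p.1 p.2 ∂π :=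
      setIntegral_nonneg (hCm.prod hCm) fun p _ => (hW.2.2 p.1 p.2).1
    have : |∫ p in C ×ˢ C, W p.1 p.2 ∂π| < 1 / (m + 1 : ℝ) := by
      rw [← himg]; exact hWee
    rw [abs_of_nonneg hint_nonneg] at this
    exact this.le
  choose Bs hBm hBb hBD using hstep
  have hD : Tendsto (fun k => ∫⁻ p, ENNReal.ofReal (W p.1 p.2)
      ∂((μ.restrict (Bs k)).prod (μ.restrict (Bs k)))) atTop (nhds 0) := by
    have h0 : Tendsto (fun m : ℕ => ENNReal.ofReal (1 / (m + 1 : ℝ))) atTop (nhds 0) := by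
      rw [show (0:ℝ≥0∞) = ENNReal.ofReal 0 by simp]
      exact (ENNReal.continuous_ofReal.tendsto 0).comp
        tendsto_one_div_add_atTop_nhds_zero_nat
    exact tendsto_of_tendsto_of_tendsto_of_le_of_le tendsto_const_nhds h0
      (fun k => zero_le) hBD
  obtain ⟨A, hAind, hAb⟩ := main_aux μ hW Bs hBm b hBb hD
  have hfin : b ≤ indepNum μ W := by
    rw [indepNum]
    exact le_trans hAb (le_iSup_of_le A (le_iSup_of_le hAind le_rfl))
  exact lt_irrefl b (lt_of_le_of_lt hfin hb1)
end

section
/- Let G be a finite graph and W a graphon representation of G. Then the graphon chromatic number χ(W) equals the chromatic number χ(G). -/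
open MeasureTheory ENNReal Filter
open scoped Classical

open MeasureTheory ENNReal Filter

theorem stmt_5 {Ω : Type*} [MeasurableSpace Ω] (μ : Measure Ω) [IsProbabilityMeasure μ]
    [NullSingletonClass μ] {W : Ω → Ω → ℝ} (hW : IsGraphon W)
    {V : Type*} [Fintype V] (G : SimpleGraph V) (hrep : IsGraphonRep μ G W) :
    graphonChrom μ W = G.chromaticNumber := by
    classical
  obtain ⟨P, hPm, hPdisj, hPμ, hPcov, hPW⟩ := hrep
  have hae : ∀ᵐ p ∂(μ.prod μ), ∀ u v : V, p.1 ∈ P u → p.2 ∈ P v →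
      W p.1 p.2 = if G.Adj u v then 1 else 0 := by
    rw [ae_all_iff]; intro u; rw [ae_all_iff]; exact fun v => hPW u v
  have hPpos : ∀ v : V, μ (P v) ≠ 0 := by
    intro v
    rw [hPμ v]
    simp [ENNReal.div_eq_zero_iff]
  have key : {k : ℕ | ∃ f : Ω → Fin k, Measurable f ∧ ∀ i, IsIndepSet μ W (f ⁻¹' {i})}
      = setOf G.Colorable := by
    ext k
    simp only [Set.mem_setOf_eq]
    constructor
    · rintro ⟨f, hfm, hfi⟩
      have hpos : ∀ v : V, ∃ i : Fin k, μ (P v ∩ f ⁻¹' {i}) ≠ 0 := by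
        intro v
        by_contra h
        push_neg at h
        have hcov : P v ⊆ ⋃ i : Fin k, P v ∩ f ⁻¹' {i} := fun x hx =>
          Set.mem_iUnion.2 ⟨f x, hx, rfl⟩
        have hle := (measure_mono hcov).trans (measure_iUnion_le (μ := μ) fun i => P v ∩ f ⁻¹' {i})
        simp only [h, tsum_zero, nonpos_iff_eq_zero] at hle
        exact hPpos v hle
      choose c hc using hpos
      exact ⟨SimpleGraph.Coloring.mk c (by
        intro u v huv hcc
        have hA : (μ.prod μ) ((P u ∩ f ⁻¹' {c u}) ×ˢ (P v ∩ f ⁻¹' {c v})) = 0 := by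
          rw [measure_eq_zero_iff_ae_notMem]
          filter_upwards [hae, (hfi (c u)).2] with p h1 h2
          rintro ⟨⟨hp1P, hp1f⟩, hp2P, hp2f⟩
          have e1 := h1 u v hp1P hp2P
          rw [if_pos huv] at e1
          have e2 := h2 hp1f (by rw [hcc]; exact hp2f)
          rw [e1] at e2
          norm_num at e2
        rw [Measure.prod_prod, mul_eq_zero] at hA
        rcases hA with hA | hA
        · exact hc u hA
        · exact hc v hA)⟩
    · rintro ⟨c⟩
      have hvx : ∀ x : Ω, ∃ v, x ∈ P v := fun x =>
        Set.mem_iUnion.1 (hPcov ▸ Set.mem_univ x)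
      choose vert hvert using hvx
      have huniq : ∀ {x : Ω} {v : V}, x ∈ P v → vert x = v := by
        intro x v hxv
        by_contra hne
        exact Set.disjoint_left.1 (hPdisj hne) (hvert x) hxv
      have hpre : ∀ i : Fin k,
          (fun x => c (vert x)) ⁻¹' {i} = ⋃ (v : V) (_ : c v = i), P v := by
        intro i; ext x
        simp only [Set.mem_preimage, Set.mem_singleton_iff, Set.mem_iUnion]
        constructor
        · intro hx; exact ⟨vert x, hx, hvert x⟩
        · rintro ⟨v, hcv, hxv⟩; rw [huniq hxv, hcv]
      have hmeas : ∀ i : Fin k, MeasurableSet ((fun x => c (vert x)) ⁻¹' {i}) := by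
        intro i
        rw [hpre i]
        exact MeasurableSet.iUnion fun v => MeasurableSet.iUnion fun _ => hPm v
      refine ⟨fun x => c (vert x), measurable_to_countable' hmeas, ?_⟩
      intro i
      refine ⟨hmeas i, ?_⟩
      filter_upwards [hae] with p h h1 h2
      have e := h (vert p.1) (vert p.2) (hvert p.1) (hvert p.2)
      rw [if_neg] at e
      · exact e
      · intro hadj
        have h1' : c (vert p.1) = i := h1
        have h2' : c (vert p.2) = i := h2
        exact c.valid hadj (h1'.trans h2'.symm)
  rw [graphonChrom, key, sInf_image]
  rfl
end

section
/- Let G be a finite graph and W a graphon representation of G. Then the fractional chromatic number of G equals the graphon fractional chromatic number of W: χ_frac(G) = χ_frac(W). -/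
open MeasureTheory ENNReal Filter
open scoped Classical

open MeasureTheory ENNReal Filter

theorem stmt_9 {Ω : Type*} [MeasurableSpace Ω] (μ : Measure Ω) [IsProbabilityMeasure μ]
    [NullSingletonClass μ] {W : Ω → Ω → ℝ} (hW : IsGraphon W)
    {V : Type*} [Fintype V] (G : SimpleGraph V) (hrep : IsGraphonRep μ G W) :
    fracChrom G = graphonFracChrom μ W := by
  classical
  obtain ⟨P, hPm, hPd, hPμ, hPU, hPW⟩ := hrep
  have hPne : ∀ v, μ (P v) ≠ 0 := by
    intro v; rw [hPμ v]; simp [ENNReal.div_eq_zero_iff]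
  have hPfin : ∀ v, μ (P v) ≠ ⊤ := fun v => measure_ne_top μ _
  have hPWall : ∀ᵐ p ∂(μ.prod μ), ∀ u v : V, p.1 ∈ P u → p.2 ∈ P v →
      W p.1 p.2 = if G.Adj u v then 1 else 0 := by
    rw [ae_all_iff]; intro u; rw [ae_all_iff]; intro v; exact hPW u v
  -- union of parts over an independent set of G is an independent set of W
  have hAJindep : ∀ J : Set V, GraphIndep G J → IsIndepSet μ W (⋃ v ∈ J, P v) := by
    intro J hJ
    constructor
    · exact MeasurableSet.biUnion J.to_countable fun v _ => hPm v
    · filter_upwards [hPWall] with p hp h1 h2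
      obtain ⟨u, hu, h1'⟩ := Set.mem_iUnion₂.mp h1
      obtain ⟨v, hv, h2'⟩ := Set.mem_iUnion₂.mp h2
      rw [hp u v h1' h2', if_neg]
      intro hadj
      rcases eq_or_ne u v with rfl | huv
      · exact G.irrefl hadj
      · exact hJ hu hv huv hadj
  -- the shadow S of an independent set of W is independent in G
  set S : Set Ω → Set V := fun A => {v | μ (A ∩ P v) ≠ 0} with hSdef
  have hSindep : ∀ A, IsIndepSet μ W A → GraphIndep G (S A) := by
    intro A hA u hu v hv huv hadj
    have hnull : μ.prod μ ((A ∩ P u) ×ˢ (A ∩ P v)) = 0 := by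
      rw [measure_eq_zero_iff_ae_notMem]
      filter_upwards [hA.2, hPW u v] with p h0 h1 hp
      obtain ⟨⟨hpa1, hpu⟩, hpa2, hpv⟩ := Set.mem_prod.mp hp
      have e0 := h0 hpa1 hpa2
      have e1 := h1 hpu hpv
      rw [if_pos hadj, e0] at e1
      exact zero_ne_one e1
    rw [Measure.prod_prod] at hnull
    rcases mul_eq_zero.mp hnull with h | h
    · exact hu h
    · exact hv h
  -- injectivity of J ↦ ⋃ v ∈ J, P v
  have hAinj : Function.Injective (fun J : Set V => ⋃ v ∈ J, P v) := by
    have key : ∀ J1 J2 : Set V, (⋃ v ∈ J1, P v) = (⋃ v ∈ J2, P v) → J1 ⊆ J2 := by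
      intro J1 J2 h v hv
      obtain ⟨x, hx⟩ := nonempty_of_measure_ne_zero (hPne v)
      have hx1 : x ∈ ⋃ u ∈ J2, P u := by rw [← h]; exact Set.mem_biUnion hv hx
      obtain ⟨u, hu, hxu⟩ := Set.mem_iUnion₂.mp hx1
      rcases eq_or_ne u v with rfl | huv
      · exact hu
      · exact ((Set.disjoint_left.mp (hPd huv)) hxu hx).elim
    intro J1 J2 h
    exact le_antisymm (key _ _ h) (key _ _ h.symm)
  refine le_antisymm ?_ ?_
  · -- fracChrom G ≤ graphonFracChrom μ W
    refine le_iInf fun c => le_iInf fun hc => ?_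
    obtain ⟨hcap, hzero, hcov⟩ := hc
    by_cases htop : ∑' A : Set Ω, c A = ⊤
    · rw [htop]; exact le_top
    set c₀ : Set V → ℝ≥0∞ :=
      fun J => ∑' A : Set Ω, if IsIndepSet μ W A ∧ S A = J then c A else 0 with hc₀
    set c' : Set V → ℝ≥0∞ := fun J => min (c₀ J) 1 with hc'
    have hkey : ∀ v : V,
        (1 : ℝ≥0∞) ≤ ∑' A : Set Ω, (if IsIndepSet μ W A ∧ v ∈ S A then c A else 0) := by
      intro v
      set h : Set Ω → ℝ≥0∞ := fun A => if IsIndepSet μ W A ∧ v ∈ S A then c A else 0 with hh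
      have hNc : (Function.support c).Countable := Summable.countable_support_ennreal htop
      haveI := hNc.to_subtype
      have hindep : ∀ A : Function.support c, IsIndepSet μ W (A : Set Ω) := by
        intro A
        by_contra h'
        exact A.2 (hzero _ h')
      have hmeas : ∀ A : Function.support c,
          AEMeasurable (fun x => Set.indicator (A : Set Ω) (fun _ => c A) x) μ :=
        fun A => (measurable_const.indicator (hindep A).1).aemeasurable
      have hsupp : ∀ x : Ω, Function.support (fun A : Set Ω => Set.indicator A (fun _ => c A) x)
          ⊆ Function.support c := by
        intro x A hA
        simp only [Function.mem_support] at hA ⊢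
        intro h0
        exact hA (by simp [h0])
      have step1 : μ (P v) ≤
          ∫⁻ x in P v, ∑' A : Function.support c, Set.indicator (A : Set Ω) (fun _ => c A) x ∂μ := by
        have hae : ∀ᵐ x ∂(μ.restrict (P v)),
            (1 : ℝ≥0∞) ≤ ∑' A : Function.support c, Set.indicator (A : Set Ω) (fun _ => c A) x := by
          refine ae_restrict_of_ae ?_
          filter_upwards [hcov] with x hx
          rw [tsum_subtype_eq_of_support_subset (hsupp x)]
          exact hx
        calc μ (P v) = ∫⁻ _ in P v, (1 : ℝ≥0∞) ∂μ := by rw [setLIntegral_const, one_mul]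
          _ ≤ _ := lintegral_mono_ae hae
      have step2 : ∫⁻ x in P v,
            ∑' A : Function.support c, Set.indicator (A : Set Ω) (fun _ => c A) x ∂μ
          = ∑' A : Function.support c, c (A : Set Ω) * μ ((A : Set Ω) ∩ P v) := by
        rw [lintegral_tsum fun A => (hmeas A).restrict]
        refine tsum_congr fun A => ?_
        rw [lintegral_indicator (hindep A).1, setLIntegral_const,
          Measure.restrict_apply (hindep A).1]
      have step3 : ∑' A : Function.support c, c (A : Set Ω) * μ ((A : Set Ω) ∩ P v)
          ≤ (∑' A : Set Ω, h A) * μ (P v) := by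
        rw [← tsum_subtype_eq_of_support_subset
          (show Function.support h ⊆ Function.support c by
            intro A hA
            simp only [Function.mem_support, hh] at hA ⊢
            intro h0
            exact hA (by simp [h0])), ← ENNReal.tsum_mul_right]
        refine ENNReal.tsum_le_tsum fun A => ?_
        by_cases hz : μ ((A : Set Ω) ∩ P v) = 0
        · rw [hz, mul_zero]; exact zero_le
        · have hAv : v ∈ S (A : Set Ω) := hz
          have : h (A : Set Ω) = c (A : Set Ω) := if_pos ⟨hindep A, hAv⟩
          rw [this]
          exact mul_le_mul_right (measure_mono Set.inter_subset_right) _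
      have : μ (P v) ≤ (∑' A : Set Ω, h A) * μ (P v) := (step1.trans step2.le).trans step3
      have h1 : (1 : ℝ≥0∞) * μ (P v) ≤ (∑' A : Set Ω, h A) * μ (P v) := by rwa [one_mul]
      exact (ENNReal.mul_le_mul_iff_left (hPne v) (hPfin v)).mp h1
    have hcov' : ∀ v : V, (1 : ℝ≥0∞) ≤ ∑' J : Set V, Set.indicator J (fun _ => c' J) v := by
      intro v
      by_cases hex : ∃ J : Set V, v ∈ J ∧ 1 ≤ c₀ J
      · obtain ⟨J, hvJ, h1⟩ := hex
        have hJ1 : Set.indicator J (fun _ => c' J) v = 1 := by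
          rw [Set.indicator_of_mem hvJ]
          exact min_eq_right h1
        calc (1 : ℝ≥0∞) = Set.indicator J (fun _ => c' J) v := hJ1.symm
          _ ≤ _ := ENNReal.le_tsum J
      · push_neg at hex
        refine (hkey v).trans ?_
        have swap : ∑' A : Set Ω, (if IsIndepSet μ W A ∧ v ∈ S A then c A else 0)
            = ∑' J : Set V, ∑' A : Set Ω,
              (if v ∈ J ∧ IsIndepSet μ W A ∧ S A = J then c A else 0) := by
          rw [← ENNReal.tsum_comm]
          refine tsum_congr fun A => ?_
          rw [tsum_eq_single (S A) fun J hJ => if_neg fun hcnd => hJ hcnd.2.2.symm]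
          by_cases h1 : IsIndepSet μ W A ∧ v ∈ S A
          · rw [if_pos h1, if_pos ⟨h1.2, h1.1, rfl⟩]
          · rw [if_neg h1, if_neg]
            rintro ⟨ha, hb, -⟩
            exact h1 ⟨hb, ha⟩
        rw [swap]
        refine ENNReal.tsum_le_tsum fun J => ?_
        by_cases hvJ : v ∈ J
        · have heq : ∑' A : Set Ω, (if v ∈ J ∧ IsIndepSet μ W A ∧ S A = J then c A else 0)
              = c₀ J := by
            rw [hc₀]
            exact tsum_congr fun A => by simp [hvJ]
          rw [heq, Set.indicator_of_mem hvJ]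
          exact le_min le_rfl (hex J hvJ).le
        · have heq : ∑' A : Set Ω, (if v ∈ J ∧ IsIndepSet μ W A ∧ S A = J then c A else 0)
              = 0 := ENNReal.tsum_eq_zero.2 fun A => if_neg fun hcnd => hvJ hcnd.1
          rw [heq, Set.indicator_of_notMem hvJ]
    have hzero' : ∀ J : Set V, ¬ GraphIndep G J → c' J = 0 := by
      intro J hJ
      have h0 : c₀ J = 0 := by
        rw [hc₀]
        refine ENNReal.tsum_eq_zero.2 fun A => if_neg ?_
        rintro ⟨hind, hSA⟩
        exact hJ (hSA ▸ hSindep A hind)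
      show min (c₀ J) 1 = 0
      rw [h0]
      simp
    have hobj : ∑' J : Set V, c' J ≤ ∑' A : Set Ω, c A := by
      calc ∑' J : Set V, c' J ≤ ∑' J : Set V, c₀ J :=
            ENNReal.tsum_le_tsum fun J => min_le_left _ _
        _ = ∑' A : Set Ω, ∑' J : Set V, (if IsIndepSet μ W A ∧ S A = J then c A else 0) :=
            ENNReal.tsum_comm
        _ ≤ ∑' A : Set Ω, c A := by
            refine ENNReal.tsum_le_tsum fun A => ?_
            rw [tsum_eq_single (S A) fun J hJ => if_neg fun hcnd => hJ hcnd.2.symm]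
            split_ifs
            · exact le_rfl
            · exact zero_le
    refine le_trans ?_ hobj
    exact iInf₂_le c' ⟨fun J => min_le_right _ _, hzero', hcov'⟩
  · -- graphonFracChrom μ W ≤ fracChrom G
    refine le_iInf fun c => le_iInf fun hc => ?_
    obtain ⟨hcap, hzero, hcov⟩ := hc
    set AJ : Set V → Set Ω := fun J => ⋃ v ∈ J, P v with hAJ
    set cW : Set Ω → ℝ≥0∞ :=
      fun B => ∑' J : Set V, if B = AJ J ∧ GraphIndep G J then c J else 0 with hcWdef
    have hcWle : ∀ J, GraphIndep G J → c J ≤ cW (AJ J) := by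
      intro J hJ
      calc c J = (if AJ J = AJ J ∧ GraphIndep G J then c J else 0) := (if_pos ⟨rfl, hJ⟩).symm
        _ ≤ cW (AJ J) := ENNReal.le_tsum J
    have hcWcol : IsFracColoring μ W cW := by
      refine ⟨?_, ?_, ?_⟩
      · intro B
        by_cases hB : ∃ J, B = AJ J
        · obtain ⟨J0, rfl⟩ := hB
          rw [hcWdef]
          simp only []
          rw [tsum_eq_single J0 fun J hJ => if_neg fun hcnd => hJ (hAinj hcnd.1.symm)]
          split_ifs with hx
          · exact hcap J0
          · exact zero_le_one
        · rw [hcWdef]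
          simp only []
          rw [ENNReal.tsum_eq_zero.2 fun J => if_neg fun hcnd => hB ⟨J, hcnd.1⟩]
          exact zero_le_one
      · intro B hB
        rw [hcWdef]
        refine ENNReal.tsum_eq_zero.2 fun J => if_neg ?_
        rintro ⟨rfl, hJ⟩
        exact hB (hAJindep J hJ)
      · refine ae_of_all _ fun x => ?_
        have hx : x ∈ ⋃ v, P v := by rw [hPU]; exact Set.mem_univ x
        obtain ⟨v, hv⟩ := Set.mem_iUnion.mp hx
        calc (1 : ℝ≥0∞) ≤ ∑' J : Set V, Set.indicator J (fun _ => c J) v := hcov v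
          _ ≤ ∑' J : Set V, Set.indicator (AJ J) (fun _ => cW (AJ J)) x := by
              refine ENNReal.tsum_le_tsum fun J => ?_
              by_cases hvJ : v ∈ J
              · rw [Set.indicator_of_mem hvJ,
                  Set.indicator_of_mem (show x ∈ AJ J from Set.mem_biUnion hvJ hv)]
                by_cases hcJ : c J = 0
                · rw [hcJ]; exact zero_le
                · exact hcWle J (by by_contra h'; exact hcJ (hzero J h'))
              · rw [Set.indicator_of_notMem hvJ]; exact zero_le
          _ ≤ ∑' B : Set Ω, Set.indicator B (fun _ => cW B) x :=
              tsum_comp_le_tsum_of_injective hAinj _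
    refine le_trans (iInf₂_le cW hcWcol) ?_
    calc ∑' B : Set Ω, cW B
        = ∑' J : Set V, ∑' B : Set Ω, (if B = AJ J ∧ GraphIndep G J then c J else 0) := by
          rw [hcWdef]; exact ENNReal.tsum_comm
      _ ≤ ∑' J : Set V, c J := by
          refine ENNReal.tsum_le_tsum fun J => ?_
          rw [tsum_eq_single (AJ J) fun B hB => if_neg fun hcnd => hB hcnd.1]
          split_ifs
          · exact le_rfl
          · exact zero_le
end

section
/- Let W be a graphon with finite fractional chromatic number χ_frac(W) < ∞. Then W has finite chromatic number χ(W) < ∞. -/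
open MeasureTheory ENNReal Filter
open scoped Classical

open MeasureTheory ENNReal Filter


section Aux

open scoped Classical

variable {Ω : Type*} [MeasurableSpace Ω]

lemma isIndepSet_empty (μ : Measure Ω) (W : Ω → Ω → ℝ) : IsIndepSet μ W (∅ : Set Ω) :=
  ⟨MeasurableSet.empty, Filter.Eventually.of_forall fun _ h => h.elim⟩

lemma isIndepSet_subset_union_null {μ : Measure Ω} [SigmaFinite μ] {W : Ω → Ω → ℝ}
    {I B Z : Set Ω}
    (hI : IsIndepSet μ W I) (hB : MeasurableSet B) (hZ : MeasurableSet Z) (hZ0 : μ Z = 0)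
    (hsub : B ⊆ I ∪ Z) : IsIndepSet μ W B := by
  refine ⟨hB, ?_⟩
  have h1 : ∀ᵐ p ∂(μ.prod μ), p.1 ∉ Z := by
    rw [ae_iff]
    have he : {p : Ω × Ω | ¬ p.1 ∉ Z} = Z ×ˢ Set.univ := by
      ext p; simp
    rw [he, Measure.prod_prod, hZ0, zero_mul]
  have h2 : ∀ᵐ p ∂(μ.prod μ), p.2 ∉ Z := by
    rw [ae_iff]
    have he : {p : Ω × Ω | ¬ p.2 ∉ Z} = Set.univ ×ˢ Z := by
      ext p; simp
    rw [he, Measure.prod_prod, hZ0, mul_zero]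
  filter_upwards [hI.2, h1, h2] with p hp hp1 hp2 hb1 hb2
  exact hp ((hsub hb1).resolve_right hp1) ((hsub hb2).resolve_right hp2)

lemma chrom_lt_top_of_finite_cover {μ : Measure Ω} [IsProbabilityMeasure μ] {W : Ω → Ω → ℝ}
    (t : Finset (Set Ω)) (ht : ∀ I ∈ t, IsIndepSet μ W I) (htne : t.Nonempty)
    (hcov : ∀ᵐ x ∂μ, ∃ I ∈ t, x ∈ I) : graphonChrom μ W < ⊤ := by
  set k := t.card with hkdef
  have hk : 0 < k := Finset.card_pos.mpr htne
  set J : Fin k → Set Ω := fun i => ((t.equivFin.symm i : t) : Set Ω) with hJdef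
  have hJind : ∀ i, IsIndepSet μ W (J i) := fun i => ht _ (t.equivFin.symm i).2
  have hJmeas : ∀ i, MeasurableSet (J i) := fun i => (hJind i).1
  set A : Set Ω := ⋃ i, J i with hAdef
  have hAmeas : MeasurableSet A := MeasurableSet.iUnion fun i => hJmeas i
  have hcovA : ∀ᵐ x ∂μ, x ∈ A := by
    filter_upwards [hcov] with x hx
    obtain ⟨I, hIt, hxI⟩ := hx
    refine Set.mem_iUnion.mpr ⟨t.equivFin ⟨I, hIt⟩, ?_⟩
    simp [hJdef]
    exact hxI
  have hAc : μ Aᶜ = 0 := by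
    have := ae_iff.mp hcovA
    simpa [Set.compl_def] using this
  set i₀ : Fin k := ⟨0, hk⟩ with hi0
  set f : Ω → Fin k := fun x =>
    if h : (Finset.univ.filter fun i => x ∈ J i).Nonempty
    then (Finset.univ.filter fun i => x ∈ J i).min' h else i₀ with hfdef
  have hpre : ∀ i : Fin k, f ⁻¹' {i} =
      (J i ∩ {x | ∀ j, x ∈ J j → i ≤ j}) ∪ (if i = i₀ then Aᶜ else ∅) := by
    intro i
    ext x
    simp only [Set.mem_preimage, Set.mem_singleton_iff, hfdef]
    constructor
    · intro hx
      by_cases h : (Finset.univ.filter fun i => x ∈ J i).Nonempty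
      · rw [dif_pos h] at hx
        have hmem := Finset.min'_mem _ h
        rw [hx] at hmem
        have hxJ : x ∈ J i := (Finset.mem_filter.mp hmem).2
        refine Or.inl ⟨hxJ, fun j hj => ?_⟩
        have : j ∈ Finset.univ.filter fun i => x ∈ J i :=
          Finset.mem_filter.mpr ⟨Finset.mem_univ _, hj⟩
        rw [← hx]
        exact Finset.min'_le _ _ this
      · rw [dif_neg h] at hx
        have hxA : x ∈ Aᶜ := by
          intro hxA
          obtain ⟨j, hj⟩ := Set.mem_iUnion.mp hxA
          exact h ⟨j, Finset.mem_filter.mpr ⟨Finset.mem_univ _, hj⟩⟩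
        rw [← hx]
        simp [hxA]
    · intro hx
      rcases hx with ⟨hxJ, hle⟩ | hx
      · have h : (Finset.univ.filter fun i => x ∈ J i).Nonempty :=
          ⟨i, Finset.mem_filter.mpr ⟨Finset.mem_univ _, hxJ⟩⟩
        rw [dif_pos h]
        refine le_antisymm (Finset.min'_le _ i ?_)
          (hle _ (Finset.mem_filter.mp (Finset.min'_mem _ h)).2)
        exact Finset.mem_filter.mpr ⟨Finset.mem_univ i, hxJ⟩
      · by_cases hii : i = i₀
        · rw [if_pos hii] at hx
          have h : ¬ (Finset.univ.filter fun i => x ∈ J i).Nonempty := by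
            rintro ⟨j, hj⟩
            exact hx (Set.mem_iUnion.mpr ⟨j, (Finset.mem_filter.mp hj).2⟩)
          rw [dif_neg h, hii]
        · rw [if_neg hii] at hx
          exact hx.elim
  have hpremeas : ∀ i : Fin k, MeasurableSet (f ⁻¹' {i}) := by
    intro i
    rw [hpre i]
    refine MeasurableSet.union (MeasurableSet.inter (hJmeas i) ?_) ?_
    · have : {x | ∀ j, x ∈ J j → i ≤ j} = ⋂ j, {x | x ∈ J j → i ≤ j} := by
        ext x; simp
      rw [this]
      refine MeasurableSet.iInter fun j => ?_
      by_cases hij : i ≤ j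
      · have : {x | x ∈ J j → i ≤ j} = Set.univ := by
          ext x; simp [hij]
        rw [this]; exact MeasurableSet.univ
      · have : {x | x ∈ J j → i ≤ j} = (J j)ᶜ := by
          ext x; simp [hij]
        rw [this]; exact (hJmeas j).compl
    · by_cases hii : i = i₀ <;> simp [hii, hAmeas.compl]
  have hfmeas : Measurable f := measurable_to_countable' hpremeas
  have hpreind : ∀ i : Fin k, IsIndepSet μ W (f ⁻¹' {i}) := by
    intro i
    refine isIndepSet_subset_union_null (hJind i) (hpremeas i) hAmeas.compl hAc ?_
    rw [hpre i]
    rintro x (⟨hx, -⟩ | hx)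
    · exact Or.inl hx
    · by_cases hii : i = i₀
      · rw [if_pos hii] at hx; exact Or.inr hx
      · rw [if_neg hii] at hx; exact hx.elim
  have hmem : (k : ℕ∞) ∈
      ((↑) '' {k : ℕ | ∃ f : Ω → Fin k, Measurable f ∧ ∀ i, IsIndepSet μ W (f ⁻¹' {i})}) :=
    ⟨k, ⟨f, hfmeas, hpreind⟩, rfl⟩
  exact lt_of_le_of_lt (sInf_le hmem) (WithTop.coe_lt_top k)

end Aux

set_option maxHeartbeats 1000000 in
theorem stmt_10 {Ω : Type*} [MeasurableSpace Ω] (μ : Measure Ω) [IsProbabilityMeasure μ]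
    [NullSingletonClass μ] {W : Ω → Ω → ℝ} (hW : IsGraphon W)
    (hfin : graphonFracChrom μ W < ⊤) :
    graphonChrom μ W < ⊤ := by
  -- extract a fractional coloring of finite total weight
  rw [graphonFracChrom] at hfin
  rw [iInf_lt_iff] at hfin
  obtain ⟨c, hc⟩ := hfin
  rw [iInf_lt_iff] at hc
  obtain ⟨hcol, hF⟩ := hc
  obtain ⟨hc1, hc0, hccov⟩ := hcol
  set F := ∑' I : Set Ω, c I with hFdef
  haveI : (MeasureTheory.ae μ).NeBot :=
    MeasureTheory.ae_neBot.mpr (IsProbabilityMeasure.ne_zero μ)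
  -- F ≥ 1
  have hF1 : (1 : ℝ≥0∞) ≤ F := by
    obtain ⟨x, hx⟩ := hccov.exists
    refine le_trans hx (ENNReal.tsum_le_tsum fun I => ?_)
    exact Set.indicator_le_self I _ x
  have hFne : F ≠ 0 := fun h => by simp [h] at hF1
  -- choose a finite set capturing all but < 1/2 of the weight
  have hsub : F - 2⁻¹ < F := ENNReal.sub_lt_self hF.ne hFne (by norm_num)
  have : F - 2⁻¹ < ⨆ s : Finset (Set Ω), ∑ I ∈ s, c I := by
    rwa [← ENNReal.tsum_eq_iSup_sum]
  obtain ⟨s, hs⟩ := lt_iSup_iff.mp this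
  have hsplit : (∑ I ∈ s, c I) + (∑' I : Set Ω, if I ∈ s then 0 else c I) = F := by
    have h1 : (∑' I : Set Ω, if I ∈ s then c I else 0) = ∑ I ∈ s, c I :=
      (tsum_eq_sum fun b hb => if_neg hb).trans
        (Finset.sum_congr rfl fun b hb => if_pos hb)
    rw [← h1, ← ENNReal.tsum_add]
    exact tsum_congr fun I => by by_cases h : I ∈ s <;> simp [h]
  have htail : (∑' I : Set Ω, if I ∈ s then 0 else c I) < 2⁻¹ := by
    by_contra h
    push_neg at h
    have h1 : (∑ I ∈ s, c I) + 2⁻¹ ≤ F := by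
      rw [← hsplit]
      exact add_le_add_right h _
    have h2 : (∑ I ∈ s, c I) ≤ F - 2⁻¹ :=
      ENNReal.le_sub_of_add_le_right (by norm_num) h1
    exact absurd hs (not_lt.mpr h2)
  -- a.e. every point lies in some independent set of s
  have hcov : ∀ᵐ x ∂μ, ∃ I ∈ s, x ∈ I ∧ IsIndepSet μ W I := by
    filter_upwards [hccov] with x hx
    have hsplitx : (∑ I ∈ s, Set.indicator I (fun _ => c I) x)
        + (∑' I : Set Ω, if I ∈ s then 0 else Set.indicator I (fun _ => c I) x)
        = ∑' I : Set Ω, Set.indicator I (fun _ => c I) x := by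
      have h1 : (∑' I : Set Ω, if I ∈ s then Set.indicator I (fun _ => c I) x else 0)
          = ∑ I ∈ s, Set.indicator I (fun _ => c I) x :=
        (tsum_eq_sum fun b hb => if_neg hb).trans
          (Finset.sum_congr rfl fun b hb => if_pos hb)
      rw [← h1, ← ENNReal.tsum_add]
      exact tsum_congr fun I => by by_cases h : I ∈ s <;> simp [h]
    have htailx : (∑' I : Set Ω, if I ∈ s then 0 else Set.indicator I (fun _ => c I) x)
        < 2⁻¹ := by
      refine lt_of_le_of_lt (ENNReal.tsum_le_tsum fun I => ?_) htail
      by_cases h : I ∈ s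
      · simp [h]
      · simp only [if_neg h]
        exact Set.indicator_le_self _ _ x
    have hpos : (∑ I ∈ s, Set.indicator I (fun _ => c I) x) ≠ 0 := by
      intro h0
      rw [← hsplitx, h0, zero_add] at hx
      exact absurd (lt_of_le_of_lt hx htailx) (by norm_num)
    obtain ⟨I, hIs, hInd⟩ := Finset.exists_ne_zero_of_sum_ne_zero hpos
    have hxI : x ∈ I := by
      by_contra hxI
      exact hInd (Set.indicator_of_notMem hxI _)
    have hcI : c I ≠ 0 := by
      intro h0
      exact hInd (by simp [Set.indicator_apply, h0])
    exact ⟨I, hIs, hxI, by_contra fun hni => hcI (hc0 I hni)⟩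
  -- finish via the finite-cover lemma
  set t : Finset (Set Ω) := insert ∅ (s.filter (IsIndepSet μ W)) with htdef
  have ht : ∀ I ∈ t, IsIndepSet μ W I := by
    intro I hI
    rcases Finset.mem_insert.mp hI with h | h
    · rw [h]; exact isIndepSet_empty μ W
    · exact (Finset.mem_filter.mp h).2
  have htne : t.Nonempty := ⟨∅, Finset.mem_insert_self _ _⟩
  have hcov' : ∀ᵐ x ∂μ, ∃ I ∈ t, x ∈ I := by
    filter_upwards [hcov] with x hx
    obtain ⟨I, hIs, hxI, hInd⟩ := hx
    exact ⟨I, Finset.mem_insert_of_mem (Finset.mem_filter.mpr ⟨hIs, hInd⟩), hxI⟩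
  exact chrom_lt_top_of_finite_cover t ht htne hcov'
end
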